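/- arXiv:1810.05593 — 5 statements merged into one kernel-verified Lean document; each statement's English description precedes it below -/
import Mathlib

section
/- (1-element stochastic separation) Let x_1, ..., x_M, x_{M+1} be i.i.d. random vectors in R^n with independent components in [-1,1], mean zero, and R_0^2 = Σ_j σ_j^2 > 0. Fix 0 < ε < 1 and define h(x) = ⟨x/R_0, x_{M+1}/R_0⟩ - 1 + ε. Then P(h(x_{M+1}) ≥ 0 and h(x_i) < 0 for all i = 1,...,M) ≥ 1 - exp(-2 R_0^4 ε^2 / n) - M exp(-R_0^4 (1-ε)^2 / (2n)). -/
open Real Set MeasureTheory ProbabilityTheory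

lemma hoeffding_log_ineq {p : ℝ} (hp0 : 0 < p) (hp1 : p < 1) (h : ℝ) :
    Real.log (1 - p + p * Real.exp h) - p * h ≤ h ^ 2 / 8 := by
  set g : ℝ → ℝ := fun t => 1 - p + p * Real.exp t with hg
  have hgpos : ∀ t, 0 < g t := fun t => by
    have : 0 < p * Real.exp t := mul_pos hp0 (exp_pos t)
    simp only [hg]; linarith
  set f : ℝ → ℝ := fun t => Real.log (g t) - p * t - t ^ 2 / 8 with hf
  set f' : ℝ → ℝ := fun t => p * Real.exp t / g t - p - t / 4 with hf'
  have hgd : ∀ t, HasDerivAt g (p * Real.exp t) t := fun t => by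
    simpa [hg] using ((Real.hasDerivAt_exp t).const_mul p).const_add (1 - p)
  have hfd : ∀ t, HasDerivAt f (f' t) t := fun t => by
    have h1 : HasDerivAt (fun t => Real.log (g t)) (p * Real.exp t / g t) t :=
      (hgd t).log (hgpos t).ne'
    have h2 : HasDerivAt (fun t : ℝ => p * t) p t := by
      simpa using (hasDerivAt_id t).const_mul p
    have h3 : HasDerivAt (fun t : ℝ => t ^ 2 / 8) (t / 4) t := by
      have := ((hasDerivAt_pow 2 t).div_const 8)
      simpa [mul_comm] using this.congr_deriv (by ring)
    exact (h1.sub h2).sub h3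
  have hf'd : ∀ t, HasDerivAt f'
      ((p * Real.exp t * g t - p * Real.exp t * (p * Real.exp t)) / (g t) ^ 2 - 1 / 4) t := by
    intro t
    have h1 : HasDerivAt (fun t => p * Real.exp t / g t)
        ((p * Real.exp t * g t - p * Real.exp t * (p * Real.exp t)) / (g t) ^ 2) t :=
      ((hasDerivAt_exp t).const_mul p).div (hgd t) (hgpos t).ne'
    have h2 : HasDerivAt (fun t : ℝ => t / 4) (1 / 4) t := (hasDerivAt_id t).div_const 4
    exact (h1.sub_const p).sub h2
  -- f' is antitone
  have hderiv_f' : ∀ t, deriv f' t ≤ 0 := by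
    intro t
    rw [(hf'd t).deriv]
    set u : ℝ := p * Real.exp t / g t with hu
    have hgt := hgpos t
    have key : (p * Real.exp t * g t - p * Real.exp t * (p * Real.exp t)) / (g t) ^ 2
        = u - u ^ 2 := by
      rw [hu]
      field_simp
    rw [key]
    nlinarith [sq_nonneg (u - 1/2)]
  have hf'anti : Antitone f' := by
    intro s t hst
    exact antitone_of_deriv_nonpos (fun t => (hf'd t).differentiableAt) hderiv_f' hst
  have hf'0 : f' 0 = 0 := by simp [hf', hg]
  have hcont : Continuous f := by
    fun_prop (disch := intro x; exact (hgpos x).ne')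
  have hfle : ∀ t, f t ≤ f 0 := by
    intro t
    rcases le_total t 0 with ht | ht
    · have : MonotoneOn f (Iic 0) := by
        apply monotoneOn_of_deriv_nonneg (convex_Iic 0) hcont.continuousOn
          (fun s _ => (hfd s).differentiableAt.differentiableWithinAt)
        intro s hs
        rw [(hfd s).deriv]
        rw [← hf'0]
        exact hf'anti (le_of_lt (by simpa using hs))
      exact this ht Set.self_mem_Iic ht
    · have : AntitoneOn f (Ici 0) := by
        apply antitoneOn_of_deriv_nonpos (convex_Ici 0) hcont.continuousOn
          (fun s _ => (hfd s).differentiableAt.differentiableWithinAt)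
        intro s hs
        rw [(hfd s).deriv]
        rw [← hf'0]
        exact hf'anti (le_of_lt (by simpa using hs))
      exact this Set.self_mem_Ici ht ht
  have := hfle h
  simp only [hf, hg] at this
  simp at this
  linarith [this]

lemma key_ineq {p : ℝ} (hp0 : 0 ≤ p) (hp1 : p ≤ 1) (h : ℝ) :
    (1 - p) * Real.exp (-p * h) + p * Real.exp ((1 - p) * h) ≤ Real.exp (h ^ 2 / 8) := by
  have h8 : (0:ℝ) ≤ h ^ 2 / 8 := by positivity
  rcases eq_or_lt_of_le hp0 with h0 | h0
  · simp [← h0]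
    simpa using Real.exp_le_exp.2 h8
  rcases eq_or_lt_of_le hp1 with h1 | h1
  · simp [h1]
    simpa using Real.exp_le_exp.2 h8
  have hgpos : 0 < 1 - p + p * Real.exp h := by
    have : 0 < p * Real.exp h := mul_pos h0 (exp_pos h)
    linarith
  have key := hoeffding_log_ineq h0 h1 h
  have : (1 - p) * Real.exp (-p * h) + p * Real.exp ((1 - p) * h)
      = Real.exp (-p * h) * (1 - p + p * Real.exp h) := by
    rw [mul_add]
    congr 1
    · ring
    · rw [mul_comm (Real.exp (-p*h)), mul_assoc, ← Real.exp_add]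
      ring_nf
  rw [this, ← Real.exp_log hgpos, ← Real.exp_add]
  apply Real.exp_le_exp.2
  linarith

/-- Hoeffding's lemma. -/
lemma mgf_le_of_mem_Icc {Ω : Type*} [MeasurableSpace Ω] {P : Measure Ω} [IsProbabilityMeasure P]
    {X : Ω → ℝ} (hX : Measurable X) {a b : ℝ}
    (hab : ∀ ω, X ω ∈ Set.Icc a b) (hmean : ∫ ω, X ω ∂P = 0) (t : ℝ) :
    mgf X P t ≤ Real.exp (t ^ 2 * (b - a) ^ 2 / 8) := by
  have hΩ : Nonempty Ω := by
    by_contra hc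
    rw [not_nonempty_iff] at hc
    have h1 : P Set.univ = 1 := measure_univ
    rw [show (Set.univ : Set Ω) = ∅ from Set.univ_eq_empty_iff.2 hc, measure_empty] at h1
    exact zero_ne_one h1
  obtain ⟨ω₀⟩ := hΩ
  have hab' : a ≤ b := le_trans (hab ω₀).1 (hab ω₀).2
  -- integrability
  have hXint : Integrable X P := by
    refine (integrable_const (max |a| |b|)).mono' hX.aestronglyMeasurable ?_
    refine Filter.Eventually.of_forall fun ω => ?_
    rw [Real.norm_eq_abs, abs_le]
    constructor
    · calc -(max |a| |b|) ≤ -|a| := by simp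
        _ ≤ a := neg_abs_le a
        _ ≤ X ω := (hab ω).1
    · calc X ω ≤ b := (hab ω).2
        _ ≤ |b| := le_abs_self b
        _ ≤ max |a| |b| := le_max_right _ _
  have ha0 : a ≤ 0 := by
    have : a = ∫ _, a ∂P := by simp
    calc a = ∫ _, a ∂P := by simp
      _ ≤ ∫ ω, X ω ∂P := integral_mono (integrable_const a) hXint fun ω => (hab ω).1
      _ = 0 := hmean
  have hb0 : 0 ≤ b := by
    calc (0:ℝ) = ∫ ω, X ω ∂P := hmean.symm
      _ ≤ ∫ _, b ∂P := integral_mono hXint (integrable_const b) fun ω => (hab ω).2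
      _ = b := by simp
  rcases eq_or_lt_of_le hab' with heq | hlt
  · -- a = b forces a = b = 0, X = 0
    have ha : a = 0 := le_antisymm ha0 (heq ▸ hb0)
    have hXz : ∀ ω, X ω = 0 := fun ω =>
      le_antisymm (ha ▸ heq ▸ (hab ω).2) (ha ▸ (hab ω).1)
    have : mgf X P t = 1 := by
      unfold mgf
      simp [hXz]
    rw [this]
    exact Real.one_le_exp (by positivity)
  -- main case a < b
  have hba : 0 < b - a := sub_pos.2 hlt
  have hint_exp : Integrable (fun ω => Real.exp (t * X ω)) P := by
    refine (integrable_const (Real.exp (|t| * max |a| |b|))).mono'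
      ((hX.const_mul t).exp).aestronglyMeasurable ?_
    refine Filter.Eventually.of_forall fun ω => ?_
    rw [Real.norm_eq_abs, abs_of_pos (exp_pos _)]
    apply Real.exp_le_exp.2
    calc t * X ω ≤ |t * X ω| := le_abs_self _
      _ = |t| * |X ω| := abs_mul _ _
      _ ≤ |t| * max |a| |b| := by
          apply mul_le_mul_of_nonneg_left _ (abs_nonneg t)
          rw [abs_le]
          constructor
          · have h1 := (hab ω).1
            have h2 := neg_abs_le a
            have h3 : -(max |a| |b|) ≤ -|a| := by simp
            linarith
          · exact le_trans (le_trans (hab ω).2 (le_abs_self b)) (le_max_right _ _)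
  -- pointwise convexity bound
  have hpt : ∀ ω, Real.exp (t * X ω)
      ≤ ((b - X ω) * Real.exp (t * a) + (X ω - a) * Real.exp (t * b)) / (b - a) := by
    intro ω
    have h1 : 0 ≤ (b - X ω) / (b - a) := div_nonneg (by linarith [(hab ω).2]) hba.le
    have h2 : 0 ≤ (X ω - a) / (b - a) := div_nonneg (by linarith [(hab ω).1]) hba.le
    have h3 : (b - X ω) / (b - a) + (X ω - a) / (b - a) = 1 := by
      field_simp
      ring
    have := convexOn_exp.2 (Set.mem_univ (t * a)) (Set.mem_univ (t * b)) h1 h2 h3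
    simp only [smul_eq_mul] at this
    have harg : (b - X ω) / (b - a) * (t * a) + (X ω - a) / (b - a) * (t * b) = t * X ω := by
      field_simp
      ring
    rw [harg] at this
    calc Real.exp (t * X ω)
        ≤ (b - X ω)/(b-a) * Real.exp (t * a) + (X ω - a)/(b-a) * Real.exp (t * b) := this
      _ = ((b - X ω) * Real.exp (t * a) + (X ω - a) * Real.exp (t * b)) / (b - a) := by ring
  -- integrate
  have hint_rhs : Integrable
      (fun ω => ((b - X ω) * Real.exp (t * a) + (X ω - a) * Real.exp (t * b)) / (b - a)) P := by
    apply Integrable.div_const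
    exact ((((integrable_const b).sub hXint).mul_const _).add ((hXint.sub (integrable_const a)).mul_const _))
  have hstep : mgf X P t ≤ (b * Real.exp (t * a) - a * Real.exp (t * b)) / (b - a) := by
    calc mgf X P t = ∫ ω, Real.exp (t * X ω) ∂P := rfl
      _ ≤ ∫ ω, ((b - X ω) * Real.exp (t * a) + (X ω - a) * Real.exp (t * b)) / (b - a) ∂P :=
          integral_mono hint_exp hint_rhs hpt
      _ = (b * Real.exp (t * a) - a * Real.exp (t * b)) / (b - a) := by
          rw [integral_div]
          congr 1
          have hfe : (fun ω => (b - X ω) * Real.exp (t * a) + (X ω - a) * Real.exp (t * b))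
              = fun ω => (Real.exp (t * b) - Real.exp (t * a)) * X ω
                  + (b * Real.exp (t * a) - a * Real.exp (t * b)) := by
            funext ω; ring
          rw [hfe, integral_add (hXint.const_mul _) (integrable_const _),
            integral_const_mul, hmean]
          simp
  refine hstep.trans ?_
  set p : ℝ := -a / (b - a) with hp
  have hp0 : 0 ≤ p := div_nonneg (by linarith) hba.le
  have hp1 : p ≤ 1 := by
    rw [hp, div_le_one hba]
    linarith
  have e1 : t * a = -p * (t * (b - a)) := by
    rw [hp]; field_simp
  have e2 : t * b = (1 - p) * (t * (b - a)) := by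
    rw [hp]; field_simp; ring
  have e3 : (b * Real.exp (t * a) - a * Real.exp (t * b)) / (b - a)
      = (1 - p) * Real.exp (-p * (t * (b-a))) + p * Real.exp ((1 - p) * (t * (b-a))) := by
    rw [← e1, ← e2, hp]
    field_simp
    ring
  rw [e3]
  have := key_ineq hp0 hp1 (t * (b - a))
  calc (1 - p) * Real.exp (-p * (t * (b-a))) + p * Real.exp ((1 - p) * (t * (b-a)))
      ≤ Real.exp ((t * (b-a)) ^ 2 / 8) := this
    _ = Real.exp (t ^ 2 * (b - a) ^ 2 / 8) := by ring_nf

lemma integrable_exp_mul_of_mem_Icc {Ω : Type*} [MeasurableSpace Ω] {P : Measure Ω}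
    [IsFiniteMeasure P] {X : Ω → ℝ} (hX : Measurable X) {C : ℝ}
    (hab : ∀ ω, |X ω| ≤ C) (t : ℝ) :
    Integrable (fun ω => Real.exp (t * X ω)) P := by
  refine (integrable_const (Real.exp (|t| * C))).mono'
    ((hX.const_mul t).exp).aestronglyMeasurable ?_
  refine Filter.Eventually.of_forall fun ω => ?_
  rw [Real.norm_eq_abs, abs_of_pos (exp_pos _)]
  apply Real.exp_le_exp.2
  calc t * X ω ≤ |t * X ω| := le_abs_self _
    _ = |t| * |X ω| := abs_mul _ _
    _ ≤ |t| * C := mul_le_mul_of_nonneg_left (hab ω) (abs_nonneg t)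

/-- Hoeffding tail bound for sums of independent bounded mean-zero rvs. -/
lemma tail_bound {Ω : Type*} [MeasurableSpace Ω] (P : Measure Ω) [IsProbabilityMeasure P]
    {n : ℕ} (hn : 0 < n) {Y : Fin n → Ω → ℝ} (hYmeas : ∀ j, Measurable (Y j))
    (hindep : iIndepFun Y P)
    {a b : Fin n → ℝ} (hbd : ∀ j ω, Y j ω ∈ Set.Icc (a j) (b j))
    (hmean : ∀ j, ∫ ω, Y j ω ∂P = 0)
    {c : ℝ} (hcpos : 0 < c) (hc : ∀ j, (b j - a j) ^ 2 ≤ c) {s : ℝ} (hs : 0 < s) :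
    (P {ω | s ≤ ∑ j, Y j ω}).toReal ≤ Real.exp (-(2 * s ^ 2 / (n * c))) := by
  set t : ℝ := 4 * s / (n * c) with ht
  have hnc : (0:ℝ) < n * c := by positivity
  have htpos : 0 < t := by positivity
  have hint : ∀ j, Integrable (fun ω => Real.exp (t * Y j ω)) P := fun j =>
    integrable_exp_mul_of_mem_Icc (hYmeas j)
      (C := max |a j| |b j|) (fun ω => by
        rw [abs_le]
        refine ⟨?_, le_trans (le_trans (hbd j ω).2 (le_abs_self _)) (le_max_right _ _)⟩
        have h1 := (hbd j ω).1
        have h2 := neg_abs_le (a j)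
        have h3 : -(max |a j| |b j|) ≤ -|a j| := by simp
        linarith) t
  have hset : {ω | s ≤ ∑ j, Y j ω} = {ω | s ≤ (∑ j, Y j) ω} := by
    ext ω; simp [Finset.sum_apply]
  rw [hset]
  have hcher := measure_ge_le_exp_mul_mgf (X := ∑ j, Y j) (μ := P) s htpos.le
    (by
      have := hindep.integrable_exp_mul_sum hYmeas (s := Finset.univ) (fun i _ => hint i)
      simpa [Finset.sum_apply] using this)
  refine hcher.trans ?_
  have hmgf : mgf (∑ j, Y j) P t ≤ Real.exp (n * (t ^ 2 * c / 8)) := by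
    rw [hindep.mgf_sum hYmeas]
    calc ∏ j, mgf (Y j) P t ≤ ∏ _j : Fin n, Real.exp (t ^ 2 * c / 8) := by
          apply Finset.prod_le_prod (fun j _ => mgf_nonneg)
          intro j _
          refine (mgf_le_of_mem_Icc (hYmeas j) (hbd j) (hmean j) t).trans ?_
          apply Real.exp_le_exp.2
          have : t ^ 2 * (b j - a j) ^ 2 ≤ t ^ 2 * c :=
            mul_le_mul_of_nonneg_left (hc j) (sq_nonneg t)
          linarith
      _ = Real.exp (n * (t ^ 2 * c / 8)) := by
          rw [Finset.prod_const, ← Real.exp_nat_mul]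
          simp
  calc Real.exp (-t * s) * mgf (∑ j, Y j) P t
      ≤ Real.exp (-t * s) * Real.exp (n * (t ^ 2 * c / 8)) := by
        exact mul_le_mul_of_nonneg_left hmgf (exp_pos _).le
    _ = Real.exp (-t * s + n * (t ^ 2 * c / 8)) := (Real.exp_add _ _).symm
    _ = Real.exp (-(2 * s ^ 2 / (n * c))) := by
        congr 1
        rw [ht]
        field_simp
        ring

/-- mgf bound for `∑ j, U ω j * V ω j` with `U, V` independent bounded vectors,
`V` with independent mean-zero coordinates. -/
lemma mgf_sum_mul_le {Ω : Type*} [MeasurableSpace Ω] (P : Measure Ω) [IsProbabilityMeasure P]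
    {n : ℕ} {U V : Ω → Fin n → ℝ} (hU : Measurable U) (hV : Measurable V)
    (hUV : IndepFun U V P)
    (hVindep : iIndepFun (fun j ω => V ω j) P)
    (hUbd : ∀ ω j, U ω j ∈ Set.Icc (-1:ℝ) 1) (hVbd : ∀ ω j, V ω j ∈ Set.Icc (-1:ℝ) 1)
    (hVmean : ∀ j, ∫ ω, V ω j ∂P = 0) (t : ℝ) :
    mgf (fun ω => ∑ j, U ω j * V ω j) P t ≤ Real.exp (n * t ^ 2 / 2) := by
  classical
  set pr : ℝ → ℝ := fun x => max (-1) (min x 1) with hpr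
  have hprmeas : Measurable pr := measurable_const.max (measurable_id.min measurable_const)
  have hprbd : ∀ x, |pr x| ≤ 1 := by
    intro x
    rw [abs_le]
    constructor
    · exact le_max_left _ _
    · exact max_le (by norm_num) (min_le_right _ _)
  have hprid : ∀ x ∈ Set.Icc (-1:ℝ) 1, pr x = x := by
    rintro x ⟨h1, h2⟩
    simp only [hpr]
    rw [min_eq_left h2, max_eq_right h1]
  set F : (Fin n → ℝ) × (Fin n → ℝ) → ℝ :=
    fun q => Real.exp (t * ∑ j, pr (q.1 j) * pr (q.2 j)) with hF
  have hFmeas : Measurable F := by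
    apply Measurable.exp
    apply Measurable.const_mul
    exact Finset.measurable_sum _ fun j _ =>
      ((hprmeas.comp ((measurable_pi_apply j).comp measurable_fst)).mul
        (hprmeas.comp ((measurable_pi_apply j).comp measurable_snd)))
  have hFbd : ∀ q, ‖F q‖ ≤ Real.exp (|t| * n) := by
    intro q
    rw [Real.norm_eq_abs, abs_of_pos (exp_pos _)]
    apply Real.exp_le_exp.2
    calc t * ∑ j, pr (q.1 j) * pr (q.2 j) ≤ |t * ∑ j, pr (q.1 j) * pr (q.2 j)| := le_abs_self _
      _ = |t| * |∑ j, pr (q.1 j) * pr (q.2 j)| := abs_mul _ _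
      _ ≤ |t| * n := by
          apply mul_le_mul_of_nonneg_left _ (abs_nonneg t)
          calc |∑ j, pr (q.1 j) * pr (q.2 j)| ≤ ∑ j, |pr (q.1 j) * pr (q.2 j)| :=
                Finset.abs_sum_le_sum_abs _ _
            _ ≤ ∑ _j : Fin n, 1 := by
                apply Finset.sum_le_sum
                intro j _
                rw [abs_mul]
                exact mul_le_one₀ (hprbd _) (abs_nonneg _) (hprbd _)
            _ = n := by simp
  have hmapU : IsProbabilityMeasure (P.map U) := Measure.isProbabilityMeasure_map hU.aemeasurable
  have hmapV : IsProbabilityMeasure (P.map V) := Measure.isProbabilityMeasure_map hV.aemeasurable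
  have hprod : P.map (fun ω => (U ω, V ω)) = (P.map U).prod (P.map V) :=
    (indepFun_iff_map_prod_eq_prod_map_map hU.aemeasurable hV.aemeasurable).1 hUV
  have hFint : Integrable F ((P.map U).prod (P.map V)) :=
    (integrable_const (Real.exp (|t| * n))).mono' hFmeas.aestronglyMeasurable
      (Filter.Eventually.of_forall hFbd)
  have heq : mgf (fun ω => ∑ j, U ω j * V ω j) P t
      = ∫ q, F q ∂((P.map U).prod (P.map V)) := by
    rw [← hprod, integral_map (hU.prodMk hV).aemeasurable hFmeas.aestronglyMeasurable]
    unfold mgf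
    congr 1
    funext ω
    simp only [hF]
    congr 2
    apply Finset.sum_congr rfl
    intro j _
    rw [hprid _ (hUbd ω j), hprid _ (hVbd ω j)]
  rw [heq, integral_prod _ hFint]
  -- inner bound
  have hinner : ∀ u : Fin n → ℝ, ∫ v, F (u, v) ∂(P.map V) ≤ Real.exp (n * t ^ 2 / 2) := by
    intro u
    have h1 : ∫ v, F (u, v) ∂(P.map V) = ∫ ω, F (u, V ω) ∂P :=
      integral_map hV.aemeasurable
        (hFmeas.comp (measurable_const.prodMk measurable_id)).aestronglyMeasurable
    rw [h1]
    set Y : Fin n → Ω → ℝ := fun j ω => pr (u j) * V ω j with hY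
    have hYmeas : ∀ j, Measurable (Y j) := fun j =>
      ((measurable_pi_apply j).comp hV).const_mul _
    have hYindep : iIndepFun Y P := by
      apply hVindep.comp (g := fun j s => pr (u j) * s)
      exact fun j => measurable_const_mul _
    have h2 : ∫ ω, F (u, V ω) ∂P = mgf (∑ j, Y j) P t := by
      unfold mgf
      congr 1
      funext ω
      simp only [hF, Finset.sum_apply, hY]
      congr 2
      exact Finset.sum_congr rfl fun j _ => by rw [hprid _ (hVbd ω j)]
    rw [h2, iIndepFun.mgf_sum hYindep hYmeas]
    calc ∏ j, mgf (Y j) P t ≤ ∏ _j : Fin n, Real.exp (t ^ 2 / 2) := by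
          apply Finset.prod_le_prod (fun j _ => mgf_nonneg)
          intro j _
          have hbd : ∀ ω, Y j ω ∈ Set.Icc (-|pr (u j)|) (|pr (u j)|) := by
            intro ω
            constructor
            · rw [neg_le]
              calc -(Y j ω) ≤ |Y j ω| := neg_le_abs _
                _ = |pr (u j)| * |V ω j| := abs_mul _ _
                _ ≤ |pr (u j)| * 1 := by
                    apply mul_le_mul_of_nonneg_left _ (abs_nonneg _)
                    rw [abs_le]; exact ⟨(hVbd ω j).1, (hVbd ω j).2⟩
                _ = |pr (u j)| := mul_one _
            · calc Y j ω ≤ |Y j ω| := le_abs_self _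
                _ = |pr (u j)| * |V ω j| := abs_mul _ _
                _ ≤ |pr (u j)| * 1 := by
                    apply mul_le_mul_of_nonneg_left _ (abs_nonneg _)
                    rw [abs_le]; exact ⟨(hVbd ω j).1, (hVbd ω j).2⟩
                _ = |pr (u j)| := mul_one _
          have hmean : ∫ ω, Y j ω ∂P = 0 := by
            simp only [hY]
            rw [integral_const_mul, hVmean j, mul_zero]
          refine (mgf_le_of_mem_Icc (hYmeas j) hbd hmean t).trans ?_
          apply Real.exp_le_exp.2
          have h3 : (|pr (u j)| - -|pr (u j)|) ^ 2 = 4 * pr (u j) ^ 2 := by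
            rw [sub_neg_eq_add, ← two_mul, mul_pow, ← sq_abs (pr (u j))]
            norm_num
          rw [h3]
          have h4 : pr (u j) ^ 2 ≤ 1 := by
            rw [← sq_abs]
            exact pow_le_one₀ (abs_nonneg _) (hprbd _)
          nlinarith [sq_nonneg t]
      _ = Real.exp (n * t ^ 2 / 2) := by
          rw [Finset.prod_const, ← Real.exp_nat_mul]
          congr 1
          simp [Finset.card_univ]
          ring
  calc ∫ u, ∫ v, F (u, v) ∂(P.map V) ∂(P.map U)
      ≤ ∫ _u, Real.exp (n * t ^ 2 / 2) ∂(P.map U) := by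
        apply integral_mono hFint.integral_prod_left (integrable_const _) hinner
    _ = Real.exp (n * t ^ 2 / 2) := by simp

/-- 1-element stochastic separation: for i.i.d. product-distribution vectors
`x 0, …, x M`, the hyperplane `h(v) = ⟨v/R₀, x M/R₀⟩ - 1 + ε` separates `x M`
from the other points with probability at least
`1 - exp(-2R₀⁴ε²/n) - M exp(-R₀⁴(1-ε)²/(2n))`. -/
theorem one_element_separation
    {Ω : Type*} [MeasurableSpace Ω] (P : Measure Ω) [IsProbabilityMeasure P]
    (n M : ℕ) (hn : 0 < n) (x : Fin (M + 1) → Ω → (Fin n → ℝ))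
    (hmeas : ∀ i, Measurable (x i))
    (hindep : iIndepFun x P)
    (hident : ∀ i i', Measure.map (x i) P = Measure.map (x i') P)
    (hcompindep : ∀ i, iIndepFun (fun j ω => x i ω j) P)
    (hbound : ∀ i j ω, x i ω j ∈ Set.Icc (-1 : ℝ) 1)
    (hmean : ∀ i j, ∫ ω, x i ω j ∂P = 0)
    (σ : Fin n → ℝ) (hvar : ∀ i j, ∫ ω, (x i ω j) ^ 2 ∂P = (σ j) ^ 2)
    (R0 : ℝ) (hR0 : 0 < R0) (hR0sq : R0 ^ 2 = ∑ j, (σ j) ^ 2)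
    (ε : ℝ) (hε : 0 < ε) (hε1 : ε < 1) :
    1 - Real.exp (-(2 * R0 ^ 4 * ε ^ 2 / n))
      - M * Real.exp (-(R0 ^ 4 * (1 - ε) ^ 2 / (2 * n))) ≤
    (P {ω | 0 ≤ (∑ j, x (Fin.last M) ω j * x (Fin.last M) ω j) / R0 ^ 2 - 1 + ε ∧
        ∀ i : Fin M,
          (∑ j, x i.castSucc ω j * x (Fin.last M) ω j) / R0 ^ 2 - 1 + ε < 0}).toReal := by
  classical
  set L := Fin.last M with hL
  have hR0sq_pos : 0 < R0 ^ 2 := by positivity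
  -- measurable coordinate evals
  have hxm : ∀ (i : Fin (M+1)) (j : Fin n), Measurable (fun ω => x i ω j) :=
    fun i j => (measurable_pi_apply j).comp (hmeas i)
  -- the event set
  set E : Set Ω := {ω | 0 ≤ (∑ j, x L ω j * x L ω j) / R0 ^ 2 - 1 + ε ∧
      ∀ i : Fin M, (∑ j, x i.castSucc ω j * x L ω j) / R0 ^ 2 - 1 + ε < 0} with hE
  -- measurability of E
  have hSmeas : ∀ (i : Fin (M+1)), Measurable (fun ω => ∑ j, x i ω j * x L ω j) :=
    fun i => Finset.measurable_sum _ fun j _ => (hxm i j).mul (hxm L j)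
  have hEmeas : MeasurableSet E := by
    apply MeasurableSet.inter
    · exact measurableSet_le measurable_const
        ((((hSmeas L).div_const _).sub_const 1).add_const ε)
    · show MeasurableSet
        {ω | ∀ i : Fin M, (∑ j, x i.castSucc ω j * x L ω j) / R0 ^ 2 - 1 + ε < 0}
      rw [Set.setOf_forall]
      exact MeasurableSet.iInter fun i => measurableSet_lt
        ((((hSmeas i.castSucc).div_const _).sub_const 1).add_const ε) measurable_const
  -- the bad events
  set Y : Fin n → Ω → ℝ := fun j ω => σ j ^ 2 - x L ω j * x L ω j with hY
  set A : Set Ω := {ω | ε * R0 ^ 2 ≤ ∑ j, Y j ω} with hA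
  set B : Fin M → Set Ω :=
    fun i => {ω | (1 - ε) * R0 ^ 2 ≤ ∑ j, x i.castSucc ω j * x L ω j} with hB
  -- complement inclusion
  have hsub : Eᶜ ⊆ A ∪ ⋃ i, B i := by
    intro ω hω
    simp only [hE, Set.mem_compl_iff, Set.mem_setOf_eq, not_and_or, not_forall, not_le,
      not_lt] at hω
    rcases hω with hω | ⟨i, hω⟩
    · left
      have h1 : (∑ j, x L ω j * x L ω j) / R0 ^ 2 < 1 - ε := by linarith
      have h2 : (∑ j, x L ω j * x L ω j) < (1 - ε) * R0 ^ 2 :=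
        (div_lt_iff₀ hR0sq_pos).1 h1
      simp only [hA, Set.mem_setOf_eq, hY]
      rw [Finset.sum_sub_distrib, ← hR0sq]
      linarith
    · right
      refine Set.mem_iUnion.2 ⟨i, ?_⟩
      simp only [hB, Set.mem_setOf_eq]
      have h1 : (1:ℝ) - ε ≤ (∑ j, x i.castSucc ω j * x L ω j) / R0 ^ 2 := by linarith
      calc (1 - ε) * R0 ^ 2 ≤ (∑ j, x i.castSucc ω j * x L ω j) / R0 ^ 2 * R0 ^ 2 :=
            mul_le_mul_of_nonneg_right h1 hR0sq_pos.le
        _ = ∑ j, x i.castSucc ω j * x L ω j := div_mul_cancel₀ _ hR0sq_pos.ne'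
  -- bound for A
  have hAbd : (P A).toReal ≤ Real.exp (-(2 * R0 ^ 4 * ε ^ 2 / n)) := by
    have hYm : ∀ j, Measurable (Y j) := fun j =>
      ((hxm L j).mul (hxm L j)).const_sub _
    have hYindep : iIndepFun Y P := by
      apply (hcompindep L).comp (g := fun j s => σ j ^ 2 - s * s)
      exact fun j => (measurable_id.mul measurable_id).const_sub _
    have hYbd : ∀ j ω, Y j ω ∈ Set.Icc (σ j ^ 2 - 1) (σ j ^ 2) := by
      intro j ω
      have h1 := (hbound L j ω).1
      have h2 := (hbound L j ω).2
      constructor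
      · simp only [hY]
        nlinarith
      · simp only [hY]
        nlinarith [mul_self_nonneg (x L ω j)]
    have hYmean : ∀ j, ∫ ω, Y j ω ∂P = 0 := by
      intro j
      simp only [hY]
      have hint : Integrable (fun ω => x L ω j * x L ω j) P := by
        refine (integrable_const (1:ℝ)).mono'
          ((hxm L j).mul (hxm L j)).aestronglyMeasurable ?_
        refine Filter.Eventually.of_forall fun ω => ?_
        rw [Real.norm_eq_abs, abs_mul, ← abs_mul]
        have h1 := (hbound L j ω).1
        have h2 := (hbound L j ω).2
        rw [abs_le]
        constructor <;> nlinarith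
      rw [integral_sub (integrable_const _) hint, integral_const]
      have : ∫ ω, x L ω j * x L ω j ∂P = σ j ^ 2 := by
        rw [← hvar L j]
        congr 1
        funext ω
        ring
      rw [this]
      simp
    have := tail_bound P hn hYm hYindep hYbd hYmean (c := 1) one_pos
      (fun j => by norm_num) (s := ε * R0 ^ 2) (by positivity)
    refine le_trans (le_of_eq (by rw [hA])) (this.trans (le_of_eq ?_))
    congr 1
    rw [mul_one]
    ring
  -- bound for each B i
  have hBbd : ∀ i, (P (B i)).toReal ≤ Real.exp (-(R0 ^ 4 * (1 - ε) ^ 2 / (2 * n))) := by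
    intro i
    set s : ℝ := (1 - ε) * R0 ^ 2 with hs
    have hspos : 0 < s := by
      apply mul_pos (by linarith) hR0sq_pos
    set t : ℝ := s / n with ht
    have htpos : 0 < t := by positivity
    have hne : i.castSucc ≠ L := by
      rw [hL]
      exact Fin.ne_of_lt (Fin.castSucc_lt_last i)
    have hUV : IndepFun (x i.castSucc) (x L) P := hindep.indepFun hne
    have hSbd : ∀ ω, |∑ j, x i.castSucc ω j * x L ω j| ≤ (n : ℝ) := by
      intro ω
      calc |∑ j, x i.castSucc ω j * x L ω j| ≤ ∑ j, |x i.castSucc ω j * x L ω j| :=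
            Finset.abs_sum_le_sum_abs _ _
        _ ≤ ∑ _j : Fin n, 1 := by
            apply Finset.sum_le_sum
            intro j _
            rw [abs_mul]
            have h1 : |x i.castSucc ω j| ≤ 1 := abs_le.2 ⟨(hbound _ j ω).1, (hbound _ j ω).2⟩
            have h2 : |x L ω j| ≤ 1 := abs_le.2 ⟨(hbound _ j ω).1, (hbound _ j ω).2⟩
            exact mul_le_one₀ h1 (abs_nonneg _) h2
        _ = n := by simp
    have hint : Integrable (fun ω => Real.exp (t * ∑ j, x i.castSucc ω j * x L ω j)) P :=
      integrable_exp_mul_of_mem_Icc (hSmeas i.castSucc) hSbd t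
    have hcher := measure_ge_le_exp_mul_mgf
      (X := fun ω => ∑ j, x i.castSucc ω j * x L ω j) (μ := P) s htpos.le hint
    have hmgf := mgf_sum_mul_le P (hmeas i.castSucc) (hmeas L) hUV (hcompindep L)
      (fun ω j => hbound i.castSucc j ω) (fun ω j => hbound L j ω) (hmean L) t
    calc (P (B i)).toReal
        ≤ Real.exp (-t * s) * mgf (fun ω => ∑ j, x i.castSucc ω j * x L ω j) P t := hcher
      _ ≤ Real.exp (-t * s) * Real.exp (n * t ^ 2 / 2) :=
          mul_le_mul_of_nonneg_left hmgf (exp_pos _).le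
      _ = Real.exp (-t * s + n * t ^ 2 / 2) := (Real.exp_add _ _).symm
      _ = Real.exp (-(R0 ^ 4 * (1 - ε) ^ 2 / (2 * n))) := by
          congr 1
          rw [ht, hs]
          have hnne : (n:ℝ) ≠ 0 := Nat.cast_ne_zero.2 hn.ne'
          field_simp
          ring
  -- union bound arithmetic
  have hfin : ∀ (S : Set Ω), P S ≠ ⊤ := fun S => measure_ne_top P S
  have hcompl : (P Eᶜ).toReal
      ≤ Real.exp (-(2 * R0 ^ 4 * ε ^ 2 / n))
        + M * Real.exp (-(R0 ^ 4 * (1 - ε) ^ 2 / (2 * n))) := by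
    have h1 : P Eᶜ ≤ P A + ∑ i, P (B i) :=
      le_trans (measure_mono hsub)
        (le_trans (measure_union_le _ _) (by
          gcongr
          exact measure_iUnion_fintype_le _ _))
    have h2 : (P Eᶜ).toReal ≤ (P A).toReal + ∑ i, (P (B i)).toReal := by
      have := ENNReal.toReal_mono (by
        refine ENNReal.add_ne_top.2 ⟨hfin A, ?_⟩
        exact (ENNReal.sum_lt_top.2 fun i _ => (hfin (B i)).lt_top).ne) h1
      rwa [ENNReal.toReal_add (hfin A)
        (ENNReal.sum_lt_top.2 fun i _ => (hfin (B i)).lt_top).ne,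
        ENNReal.toReal_sum (fun i _ => hfin (B i))] at this
    refine h2.trans ?_
    gcongr
    calc ∑ i, (P (B i)).toReal
        ≤ ∑ _i : Fin M, Real.exp (-(R0 ^ 4 * (1 - ε) ^ 2 / (2 * n))) :=
          Finset.sum_le_sum fun i _ => hBbd i
      _ = M * Real.exp (-(R0 ^ 4 * (1 - ε) ^ 2 / (2 * n))) := by
          rw [Finset.sum_const, Finset.card_univ, Fintype.card_fin, nsmul_eq_mul]
  have hsum : (P E).toReal + (P Eᶜ).toReal = 1 := by
    rw [← ENNReal.toReal_add (hfin E) (hfin Eᶜ), measure_add_measure_compl hEmeas]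
    simp
  linarith
end

section
/- Let x_1,...,x_M be i.i.d. random points, h(x) = ⟨x, w⟩ - c a fixed affine functional, and 0 ≤ p* < 1 such that P(h(x_i) ≥ 0) ≤ p* for each i. Then P(h(x_i) ≥ 0 for at most m of the M points) ≥ (1-p*)^M · exp((M-m+1)p*/(1-p*)) · (1 - (1/m!)((M-m+1)p*/(1-p*))^m). -/
open MeasureTheory ProbabilityTheory
open scoped ENNReal

open Finset in
lemma aux_exp_tail (m : ℕ) (t : ℝ) (ht : 0 ≤ t) :
    Real.exp t * (1 - t ^ m / m.factorial) ≤ ∑ k ∈ Finset.range m, t ^ k / k.factorial := by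
  have hsum : Summable fun n : ℕ => t ^ n / n.factorial := Real.summable_pow_div_factorial t
  have hsum' : Summable fun n : ℕ => t ^ (n + m) / (n + m).factorial :=
    (summable_nat_add_iff m).2 hsum
  have hexp : Real.exp t = ∑' n : ℕ, t ^ n / n.factorial := by
    rw [Real.exp_eq_exp_ℝ, NormedSpace.exp_eq_tsum_div]
  have hkey : ∑ k ∈ Finset.range m, t ^ k / k.factorial
      + ∑' n : ℕ, t ^ (n + m) / (n + m).factorial = Real.exp t := by
    rw [hexp]; exact Summable.sum_add_tsum_nat_add m hsum
  have hterm : ∀ n : ℕ, t ^ (n + m) / (n + m).factorial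
      ≤ (t ^ m / m.factorial) * (t ^ n / n.factorial) := by
    intro n
    rw [div_mul_div_comm, ← pow_add, add_comm m n]
    have hf : (m.factorial * n.factorial : ℝ) ≤ ((n + m).factorial : ℝ) := by
      exact_mod_cast Nat.le_of_dvd (n + m).factorial_pos
        (by simpa [Nat.add_comm] using Nat.factorial_mul_factorial_dvd_factorial_add m n)
    exact div_le_div_of_nonneg_left (pow_nonneg ht _) (by positivity) hf
  have htail : ∑' n : ℕ, t ^ (n + m) / (n + m).factorial
      ≤ (t ^ m / m.factorial) * Real.exp t := by
    calc ∑' n : ℕ, t ^ (n + m) / (n + m).factorial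
        ≤ ∑' n : ℕ, (t ^ m / m.factorial) * (t ^ n / n.factorial) :=
          Summable.tsum_le_tsum hterm hsum' (hsum.mul_left _)
      _ = (t ^ m / m.factorial) * ∑' n : ℕ, t ^ n / n.factorial := tsum_mul_left
      _ = (t ^ m / m.factorial) * Real.exp t := by rw [← hexp]
  nlinarith [htail, hkey]

lemma aux_choose (M m k : ℕ) (hk : k < m) (hmM : m ≤ M) :
    ((M : ℝ) - m + 1) ^ k / k.factorial ≤ M.choose k := by
  have h1 : ((M : ℝ) - m + 1) = ((M + 1 - m : ℕ) : ℝ) := by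
    have h : m ≤ M + 1 := hmM.trans (Nat.le_succ M)
    push_cast [Nat.cast_sub h]; ring
  have h2 : (M + 1 - m : ℕ) ≤ M + 1 - k := Nat.sub_le_sub_left hk.le (M + 1)
  calc ((M : ℝ) - m + 1) ^ k / k.factorial
      ≤ ((M + 1 - k : ℕ) : ℝ) ^ k / k.factorial := by
        have h3 : ((M + 1 - m : ℕ) : ℝ) ≤ ((M + 1 - k : ℕ) : ℝ) := by exact_mod_cast h2
        rw [h1]
        gcongr

    _ ≤ M.choose k := Nat.pow_le_choose k M

lemma aux_val_eq (M k : ℕ) (q : ℝ) (hkM : k < M) :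
    (M.choose k : ℝ) * (↑k * q ^ (k-1) * (1-q) ^ (M-k) + q ^ k * (((M-k : ℕ) : ℝ) * (1-q) ^ (M-k-1) * (-1)))
    = (if k = 0 then 0 else (M : ℝ) * ((M-1).choose (k-1) : ℝ) * q ^ (k-1) * (1 - q) ^ (M - 1 - (k-1)))
      - (M : ℝ) * ((M-1).choose k : ℝ) * q ^ k * (1 - q) ^ (M - 1 - k) := by
  rcases k with _ | j
  · simp only [if_pos rfl]
    rw [Nat.choose_zero_right, Nat.choose_zero_right]
    have e1 : (M - 0 - 1 : ℕ) = M - 1 := by omega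
    have e2 : (M - 0 : ℕ) = M := by omega
    rw [e1, e2, show (M - 1 - 0 : ℕ) = M - 1 by omega]
    push_cast
    ring
  · rw [if_neg (Nat.succ_ne_zero j)]
    have hjM : j + 1 ≤ M := hkM.le
    have c1 : (M.choose (j+1) : ℝ) * (j+1) = (M : ℝ) * ((M-1).choose j) := by
      have := Nat.add_one_mul_choose_eq (M-1) j
      rw [show (M-1+1) = M by omega] at this
      exact_mod_cast (congrArg (Nat.cast (R := ℝ)) this).symm
    have c2 : (M.choose (j+1) : ℝ) * ((M : ℝ) - (j+1)) = (M : ℝ) * ((M-1).choose (j+1)) := by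
      have h1 := Nat.add_one_mul_choose_eq (M-1) (j+1)
      rw [show (M-1+1) = M by omega] at h1
      have : M.choose (j+1) * (M - (j+1)) = M * ((M-1).choose (j+1)) :=
        (Nat.choose_succ_right_eq M (j+1)).symm.trans h1.symm
      have := congrArg (Nat.cast (R := ℝ)) this
      push_cast [Nat.cast_sub hjM] at this
      linarith [this]
    have e3 : ((M - (j+1) : ℕ) : ℝ) = (M : ℝ) - (j+1) := by
      push_cast [Nat.cast_sub hjM]; ring
    rw [e3]
    rw [show (j + 1 - 1 : ℕ) = j by omega]
    rw [show (M - (j+1) : ℕ) = M - 1 - j by omega,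
      show (M - 1 - j - 1 : ℕ) = M - 1 - (j+1) by omega]
    push_cast
    linear_combination (q ^ j * (1-q) ^ (M-1-j)) * c1 - (q ^ (j+1) * (1-q) ^ (M-1-(j+1))) * c2

open Finset in
lemma aux_cdf_antitone (M m : ℕ) (hm : 1 ≤ m) (hmM : m ≤ M) {p p' : ℝ}
    (hp0 : 0 ≤ p) (hpp' : p ≤ p') (hp'1 : p' ≤ 1) :
    ∑ k ∈ Finset.range m, (M.choose k : ℝ) * p' ^ k * (1 - p') ^ (M - k) ≤
      ∑ k ∈ Finset.range m, (M.choose k : ℝ) * p ^ k * (1 - p) ^ (M - k) := by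
  set F : ℝ → ℝ := fun q => ∑ k ∈ Finset.range m, (M.choose k : ℝ) * q ^ k * (1 - q) ^ (M - k)
    with hF
  have key : AntitoneOn F (Set.Icc (0:ℝ) 1) := by
    apply antitoneOn_of_deriv_nonpos (convex_Icc 0 1)
    · fun_prop
    · apply Differentiable.differentiableOn; fun_prop
    · intro q hq
      rw [interior_Icc] at hq
      set d : ℕ → ℝ := fun j =>
        (M : ℝ) * ((M-1).choose j : ℝ) * q ^ j * (1 - q) ^ (M - 1 - j) with hd
      set h : ℕ → ℝ := fun j => if j = 0 then 0 else d (j - 1) with hh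
      have hder : HasDerivAt F (∑ k ∈ Finset.range m, (h k - h (k+1))) q := by
        apply HasDerivAt.fun_sum
        intro k hk
        have hkM : k < M := lt_of_lt_of_le (Finset.mem_range.1 hk) hmM
        have h1 : HasDerivAt (fun q : ℝ => q ^ k) (k * q ^ (k-1)) q := hasDerivAt_pow k q
        have h2 : HasDerivAt (fun q : ℝ => (1-q) ^ (M-k))
            (((M-k : ℕ) : ℝ) * (1-q) ^ (M-k-1) * (-1)) q :=
          (hasDerivAt_pow (M-k) (1-q)).comp q ((hasDerivAt_id q).const_sub 1)
        have h3 := (h1.mul h2).const_mul (M.choose k : ℝ)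
        convert h3 using 1
        · ext y; ring
        · ext y; simp only [Pi.mul_apply]; ring
        · have := aux_val_eq M k q hkM
          simp only [hh, hd]
          rw [show (k + 1 - 1 : ℕ) = k by omega, if_neg (Nat.succ_ne_zero k)]
          rw [this]
      rw [hder.deriv, Finset.sum_range_sub' h m]
      have hm0 : h 0 = 0 := by simp [hh]
      have hmm : h m = d (m-1) := by
        rw [hh]; simp only [if_neg (by omega : ¬ m = 0)]
      rw [hm0, hmm, hd]
      simp only [zero_sub, neg_nonpos]
      have h1q : (0:ℝ) ≤ 1 - q := by linarith [hq.2]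
      exact mul_nonneg (mul_nonneg (mul_nonneg (by positivity) (by positivity))
        (pow_nonneg hq.1.le _)) (pow_nonneg h1q _)
  exact key (Set.mem_Icc.2 ⟨hp0, hpp'.trans hp'1⟩) (Set.mem_Icc.2 ⟨hp0.trans hpp', hp'1⟩) hpp'

open Classical in
lemma aux_card_count (M k : ℕ) :
    ((Finset.univ : Finset (Fin M → Bool)).filter
      (fun b => (Finset.univ.filter fun i => b i = true).card = k)).card = M.choose k := by
  have : M.choose k = ((Finset.univ : Finset (Fin M)).powersetCard k).card := by
    rw [Finset.card_powersetCard, Finset.card_univ, Fintype.card_fin]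
  rw [this]
  apply Finset.card_nbij' (i := fun b => Finset.univ.filter fun i => b i = true)
    (j := fun S => fun i => decide (i ∈ S))
  · intro b hb
    rw [Finset.mem_coe, Finset.mem_filter] at hb
    rw [Finset.mem_coe, Finset.mem_powersetCard]
    exact ⟨Finset.filter_subset _ _ |>.trans (Finset.subset_univ _), hb.2⟩
  · intro S hS
    rw [Finset.mem_coe, Finset.mem_powersetCard] at hS
    rw [Finset.mem_coe, Finset.mem_filter]
    refine ⟨Finset.mem_univ _, ?_⟩
    rw [← hS.2]
    congr 1
    ext i
    simp
  · intro b hb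
    funext i
    simp
  · intro S hS
    ext i
    simp

open Classical in
/-- Lemma on the number of spurious points: if `x 1, …, x M` are i.i.d. random
points and `P(h(x i) ≥ 0) ≤ p*` for the affine functional `h(v) = ⟨v, w⟩ - c`,
then `h(x i) ≥ 0` for at most `m` of the points with probability at least
`(1-p*)^M exp((M-m+1)p*/(1-p*)) (1 - ((M-m+1)p*/(1-p*))^m / m!)`. -/
theorem at_most_m_points_above_hyperplane
    {Ω : Type*} [MeasurableSpace Ω] (P : Measure Ω) [IsProbabilityMeasure P]
    (n M m : ℕ) (hm : 1 ≤ m) (hmM : m ≤ M)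
    (x : Fin M → Ω → (Fin n → ℝ))
    (hmeas : ∀ i, Measurable (x i))
    (hindep : iIndepFun x P)
    (hident : ∀ i i', Measure.map (x i) P = Measure.map (x i') P)
    (w : Fin n → ℝ) (c : ℝ)
    (pstar : ℝ) (hp0 : 0 ≤ pstar) (hp1 : pstar < 1)
    (hp : ∀ i, (P {ω | 0 ≤ (∑ l, x i ω l * w l) - c}).toReal ≤ pstar) :
    (1 - pstar) ^ M * Real.exp (((M : ℝ) - m + 1) * pstar / (1 - pstar)) *
      (1 - (1 / (Nat.factorial m)) * (((M : ℝ) - m + 1) * pstar / (1 - pstar)) ^ m) ≤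
    (P {ω |
        (Finset.univ.filter fun i : Fin M => 0 ≤ (∑ l, x i ω l * w l) - c).card ≤ m}).toReal := by
  have hM0 : 0 < M := hm.trans hmM
  set i0 : Fin M := ⟨0, hM0⟩ with hi0
  set B : Set (Fin n → ℝ) := {v | 0 ≤ (∑ l, v l * w l) - c} with hBdef
  have hB : MeasurableSet B :=
    measurableSet_le measurable_const
      ((Finset.measurable_sum _ fun l _ => by fun_prop).sub_const c)
  set q : ℝ≥0∞ := P (x i0 ⁻¹' B) with hqdef
  have hq : ∀ i, P (x i ⁻¹' B) = q := by
    intro i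
    rw [hqdef, ← Measure.map_apply (hmeas i) hB, ← Measure.map_apply (hmeas i0) hB, hident i i0]
  have hq1 : q ≤ 1 := prob_le_one
  set p : ℝ := q.toReal with hpdef
  have hppstar : p ≤ pstar := hp i0
  have hp0' : 0 ≤ p := ENNReal.toReal_nonneg
  -- counting
  set cnt : (Fin M → Bool) → ℕ := fun b => (Finset.univ.filter fun i => b i = true).card with hcnt
  set E : (Fin M → Bool) → Set Ω :=
    fun b => ⋂ i ∈ (Finset.univ : Finset (Fin M)), x i ⁻¹' (if b i then B else Bᶜ) with hE
  have hsets : ∀ b : Fin M → Bool, ∀ i, MeasurableSet (if b i then B else Bᶜ) := by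
    intro b i; by_cases hbi : b i <;> simp [hbi, hB, hB.compl]
  have hEmeas : ∀ b, MeasurableSet (E b) :=
    fun b => Finset.measurableSet_biInter _ fun i _ => (hmeas i) (hsets b i)
  have hEP : ∀ b, P (E b) = q ^ (cnt b) * (1 - q) ^ (M - cnt b) := by
    intro b
    have hind := hindep.measure_inter_preimage_eq_mul (S := Finset.univ)
      (sets := fun i => if b i then B else Bᶜ) (fun i _ => hsets b i)
    rw [hE]
    rw [hind]
    have hterm : ∀ i, P (x i ⁻¹' (if b i then B else Bᶜ)) = if b i = true then q else 1 - q := by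
      intro i
      by_cases hbi : b i
      · simp only [hbi, if_true, if_pos rfl]
        exact hq i
      · have hbf : b i = false := by simp [hbi]
        rw [hbf]
        simp only [Bool.false_eq_true, if_false]
        rw [Set.preimage_compl, measure_compl ((hmeas i) hB) (measure_ne_top P _),
          measure_univ, hq i]
    rw [Finset.prod_congr rfl (fun i _ => hterm i), Finset.prod_ite, Finset.prod_const,
      Finset.prod_const]
    have hcc := Finset.card_filter_add_card_filter_not
      (s := (Finset.univ : Finset (Fin M))) (p := fun i => b i = true)
    rw [Finset.card_univ, Fintype.card_fin] at hcc
    congr 2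
    simp only [hcnt]
    omega
  set F : Finset (Fin M → Bool) := Finset.univ.filter (fun b => cnt b < m) with hF
  have hdisj : (↑F : Set (Fin M → Bool)).PairwiseDisjoint E := by
    intro b _ b' _ hne
    obtain ⟨i, hi⟩ : ∃ i, b i ≠ b' i := by
      by_contra hcon; push_neg at hcon; exact hne (funext hcon)
    refine Set.disjoint_left.2 fun ω hω hω' => ?_
    simp only [hE, Set.mem_iInter] at hω hω'
    have h1 := hω i (Finset.mem_univ i)
    have h2 := hω' i (Finset.mem_univ i)
    cases hbi : b i <;> cases hbi' : b' i <;> rw [hbi] at h1 <;> rw [hbi'] at h2 <;>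
      simp_all [Set.mem_preimage] <;> linarith
  have hsub : (⋃ b ∈ F, E b) ⊆ {ω |
      (Finset.univ.filter fun i : Fin M => 0 ≤ (∑ l, x i ω l * w l) - c).card ≤ m} := by
    intro ω hω
    rw [Set.mem_iUnion₂] at hω
    obtain ⟨b, hbF, hωb⟩ := hω
    simp only [hE, Set.mem_iInter] at hωb
    have hfe : (Finset.univ.filter fun i : Fin M => 0 ≤ (∑ l, x i ω l * w l) - c)
        = Finset.univ.filter fun i => b i = true := by
      apply Finset.filter_congr
      intro i _
      have hmem := hωb i (Finset.mem_univ i)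
      by_cases hbi : b i
      · rw [hbi] at hmem
        simp only [if_true] at hmem
        exact iff_of_true hmem hbi
      · have hbf : b i = false := by simp [hbi]
        rw [hbf] at hmem
        simp only [Bool.false_eq_true, if_false] at hmem
        exact iff_of_false hmem (by simp [hbf])
    rw [Set.mem_setOf_eq, hfe]
    have hlt := (Finset.mem_filter.1 hbF).2
    exact le_of_lt hlt
  have hmain : ∑ b ∈ F, P (E b) ≤
      P {ω | (Finset.univ.filter fun i : Fin M => 0 ≤ (∑ l, x i ω l * w l) - c).card ≤ m} := by
    rw [← measure_biUnion_finset hdisj (fun b _ => hEmeas b)]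
    exact measure_mono hsub
  have hsumeq : ∑ b ∈ F, P (E b)
      = ∑ k ∈ Finset.range m, (M.choose k) * (q ^ k * (1 - q) ^ (M - k)) := by
    rw [← Finset.sum_fiberwise_of_maps_to (g := cnt) (t := Finset.range m)
      (fun b hb => Finset.mem_range.2 (Finset.mem_filter.1 hb).2)]
    apply Finset.sum_congr rfl
    intro k hk
    have hconst : ∀ b ∈ F.filter (fun b => cnt b = k), P (E b) = q ^ k * (1 - q) ^ (M - k) := by
      intro b hb
      rw [hEP b, (Finset.mem_filter.1 hb).2]
    rw [Finset.sum_congr rfl hconst, Finset.sum_const, nsmul_eq_mul]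
    congr 1
    have hFk : F.filter (fun b => cnt b = k) = Finset.univ.filter (fun b => cnt b = k) := by
      ext b
      simp only [hF, Finset.mem_filter, Finset.mem_univ, true_and]
      constructor
      · rintro ⟨-, hbk⟩; exact hbk
      · intro hbk; exact ⟨hbk ▸ Finset.mem_range.1 hk, hbk⟩
    rw [hFk]
    exact_mod_cast congrArg (Nat.cast (R := ℝ≥0∞)) (aux_card_count M k)
  have hfinterm : ∀ k ∈ Finset.range m, ((M.choose k : ℝ≥0∞)) * (q ^ k * (1 - q) ^ (M - k)) ≠ ⊤ := by
    intro k _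
    have hqt : q ≠ ⊤ := (hq1.trans_lt ENNReal.one_lt_top).ne
    have h1qt : (1 - q) ≠ ⊤ := ((tsub_le_self.trans_lt ENNReal.one_lt_top)).ne
    exact ENNReal.mul_ne_top (ENNReal.natCast_ne_top _)
      (ENNReal.mul_ne_top (ENNReal.pow_ne_top hqt) (ENNReal.pow_ne_top h1qt))
  have final_prob : ∑ k ∈ Finset.range m, (M.choose k : ℝ) * p ^ k * (1 - p) ^ (M - k) ≤
      (P {ω | (Finset.univ.filter fun i : Fin M =>
        0 ≤ (∑ l, x i ω l * w l) - c).card ≤ m}).toReal := by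
    have h := ENNReal.toReal_mono (measure_ne_top P _) (hsumeq ▸ hmain)
    rw [ENNReal.toReal_sum hfinterm] at h
    refine le_trans (le_of_eq ?_) h
    apply Finset.sum_congr rfl
    intro k _
    rw [ENNReal.toReal_mul, ENNReal.toReal_mul, ENNReal.toReal_pow, ENNReal.toReal_pow,
      ENNReal.toReal_natCast, ENNReal.toReal_sub_of_le hq1 ENNReal.one_ne_top,
      ENNReal.toReal_one, ← hpdef, mul_assoc]
  -- analytic chain
  set t : ℝ := ((M : ℝ) - m + 1) * pstar / (1 - pstar) with htdef
  have hmMr : (m : ℝ) ≤ M := by exact_mod_cast hmM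
  have h1mp : (0:ℝ) < 1 - pstar := by linarith
  have ht : 0 ≤ t := by
    apply div_nonneg _ h1mp.le
    apply mul_nonneg _ hp0
    linarith
  calc (1 - pstar) ^ M * Real.exp t * (1 - (1 / (Nat.factorial m)) * t ^ m)
      = (1 - pstar) ^ M * (Real.exp t * (1 - t ^ m / (Nat.factorial m))) := by ring
    _ ≤ (1 - pstar) ^ M * ∑ k ∈ Finset.range m, t ^ k / k.factorial :=
        mul_le_mul_of_nonneg_left (aux_exp_tail m t ht) (pow_nonneg h1mp.le M)
    _ = ∑ k ∈ Finset.range m, (1 - pstar) ^ M * (t ^ k / k.factorial) := Finset.mul_sum _ _ _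
    _ ≤ ∑ k ∈ Finset.range m, (M.choose k : ℝ) * pstar ^ k * (1 - pstar) ^ (M - k) := by
        apply Finset.sum_le_sum
        intro k hk
        have hkm : k < m := Finset.mem_range.1 hk
        have epow : (1 - pstar) ^ M = (1 - pstar) ^ (M - k) * (1 - pstar) ^ k := by
          rw [← pow_add]; congr 1; omega
        have heq : (1 - pstar) ^ M * (t ^ k / k.factorial)
            = (((M : ℝ) - m + 1) ^ k / k.factorial) * (pstar ^ k * (1 - pstar) ^ (M - k)) := by
          rw [htdef, div_pow, mul_pow, epow]
          field_simp
        rw [heq]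
        have := aux_choose M m k hkm hmM
        calc (((M : ℝ) - m + 1) ^ k / k.factorial) * (pstar ^ k * (1 - pstar) ^ (M - k))
            ≤ (M.choose k : ℝ) * (pstar ^ k * (1 - pstar) ^ (M - k)) := by
              apply mul_le_mul_of_nonneg_right this
              positivity
          _ = (M.choose k : ℝ) * pstar ^ k * (1 - pstar) ^ (M - k) := by ring
    _ ≤ ∑ k ∈ Finset.range m, (M.choose k : ℝ) * p ^ k * (1 - p) ^ (M - k) :=
        aux_cdf_antitone M m hm hmM hp0' hppstar hp1.le
    _ ≤ _ := final_prob
end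

section
/- Let C_n(ε) = B_n(1) ∩ {ξ ∈ R^n : ⟨x/‖x‖, ξ⟩ ≥ 1-ε} be a spherical cap of the unit n-ball (x ≠ 0 fixed, 0 < ε < 1), and let ρ(ε) = (1-(1-ε)^2)^{1/2}. Then Vol(C_n(ε)) / Vol(B_n(1)) ≤ ρ(ε)^n / 2. -/
open MeasureTheory ENNReal Pointwise

/-- Upper bound for the relative volume of a spherical cap of the unit ball:
`Vol(C_n(ε))/Vol(B_n(1)) ≤ ρ(ε)ⁿ/2` with `ρ(ε) = √(1-(1-ε)²)`. -/
theorem cap_volume_upper_bound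
    (n : ℕ) (hn : 1 ≤ n) (x : EuclideanSpace ℝ (Fin n)) (hx : x ≠ 0)
    (ε : ℝ) (hε : 0 < ε) (hε1 : ε < 1) :
    volume (Metric.closedBall (0 : EuclideanSpace ℝ (Fin n)) 1 ∩
        {ξ | 1 - ε ≤ (inner ℝ (‖x‖⁻¹ • x) ξ : ℝ)}) /
      volume (Metric.closedBall (0 : EuclideanSpace ℝ (Fin n)) 1) ≤
    ENNReal.ofReal ((Real.sqrt (1 - (1 - ε) ^ 2)) ^ n / 2) := by
  haveI : Nonempty (Fin n) := ⟨⟨0, hn⟩⟩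
  set u : EuclideanSpace ℝ (Fin n) := ‖x‖⁻¹ • x with hu
  have hux : ‖u‖ = 1 := by
    rw [hu, norm_smul, norm_inv, norm_norm, inv_mul_cancel₀ (norm_ne_zero_iff.2 hx)]
  set ρ := Real.sqrt (1 - (1 - ε) ^ 2) with hρ
  have h1ε : 0 < 1 - ε := by linarith
  have hρ2nn : 0 ≤ 1 - (1 - ε) ^ 2 := by nlinarith
  have hρnn : 0 ≤ ρ := Real.sqrt_nonneg _
  have hρsq : ρ ^ 2 = 1 - (1 - ε) ^ 2 := Real.sq_sqrt hρ2nn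
  set c : EuclideanSpace ℝ (Fin n) := (1 - ε) • u with hc
  set B := Metric.closedBall (0 : EuclideanSpace ℝ (Fin n)) 1 with hB
  set C := B ∩ {ξ : EuclideanSpace ℝ (Fin n) | 1 - ε ≤ (inner ℝ u ξ : ℝ)} with hC
  set S := Metric.closedBall (0 : EuclideanSpace ℝ (Fin n)) ρ ∩ {ξ : EuclideanSpace ℝ (Fin n) | 0 ≤ (inner ℝ u ξ : ℝ)} with hS
  set S' := Metric.closedBall (0 : EuclideanSpace ℝ (Fin n)) ρ ∩ {ξ : EuclideanSpace ℝ (Fin n) | (inner ℝ u ξ : ℝ) ≤ 0} with hS'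
  have huu : (inner ℝ u u : ℝ) = 1 := by
    rw [real_inner_self_eq_norm_sq, hux]; norm_num
  -- the cap is contained in a translate of the half-ball S
  have hsub : C ⊆ c +ᵥ S := by
    rintro ξ ⟨hξB, hξi⟩
    rw [Set.mem_vadd_set_iff_neg_vadd_mem]
    have hnorm : ‖ξ‖ ≤ 1 := by simpa [hB, Metric.mem_closedBall, dist_zero_right] using hξB
    have hi : 1 - ε ≤ (inner ℝ u ξ : ℝ) := hξi
    have hval : (-c +ᵥ ξ) = ξ - c := by
      simp [vadd_eq_add]; abel
    rw [hval]
    constructor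
    · rw [Metric.mem_closedBall, dist_zero_right]
      have hexp : ‖ξ - c‖ ^ 2 = ‖ξ‖ ^ 2 - 2 * (inner ℝ ξ c : ℝ) + ‖c‖ ^ 2 :=
        norm_sub_sq_real ξ c
      have hic : (inner ℝ ξ c : ℝ) = (1 - ε) * (inner ℝ u ξ : ℝ) := by
        rw [hc, real_inner_smul_right, real_inner_comm]
      have hcn : ‖c‖ = 1 - ε := by
        rw [hc, norm_smul, hux, Real.norm_eq_abs, abs_of_pos h1ε]; ring
      have hsq : ‖ξ - c‖ ^ 2 ≤ ρ ^ 2 := by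
        rw [hexp, hic, hcn, hρsq]
        have h1 : (1 - ε) ^ 2 ≤ (1 - ε) * (inner ℝ u ξ : ℝ) := by nlinarith
        have h2 : ‖ξ‖ ^ 2 ≤ 1 := by nlinarith [norm_nonneg ξ]
        nlinarith
      calc ‖ξ - c‖ = Real.sqrt (‖ξ - c‖ ^ 2) := (Real.sqrt_sq (norm_nonneg _)).symm
        _ ≤ Real.sqrt (ρ ^ 2) := Real.sqrt_le_sqrt hsq
        _ = ρ := Real.sqrt_sq hρnn
    · show 0 ≤ (inner ℝ u (ξ - c) : ℝ)
      have : (inner ℝ u c : ℝ) = 1 - ε := by rw [hc, real_inner_smul_right, huu]; ring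
      rw [inner_sub_right, this]; linarith
  have hmeasHalf : MeasurableSet {ξ : EuclideanSpace ℝ (Fin n) | 0 ≤ (inner ℝ u ξ : ℝ)} :=
    (isClosed_le continuous_const (continuous_const.inner continuous_id)).measurableSet
  have hmeasHalf' : MeasurableSet {ξ : EuclideanSpace ℝ (Fin n) | (inner ℝ u ξ : ℝ) ≤ 0} :=
    (isClosed_le (continuous_const.inner continuous_id) continuous_const).measurableSet
  have hmeasS' : MeasurableSet S' := Metric.isClosed_closedBall.measurableSet.inter hmeasHalf'
  -- reflection: S' = -S, so they have equal volume
  have hSneg : S' = -S := by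
    ext ξ
    simp only [hS, hS', Set.mem_neg, Set.mem_inter_iff, Metric.mem_closedBall,
      dist_zero_right, norm_neg, inner_neg_right, Set.mem_setOf_eq, neg_nonneg]
  have hvolS' : volume S' = volume S := by rw [hSneg, Measure.measure_neg]
  -- union covers the ball, intersection has measure zero
  have hunion : S ∪ S' = Metric.closedBall (0 : EuclideanSpace ℝ (Fin n)) ρ := by
    apply Set.Subset.antisymm
    · rintro ξ (⟨h, _⟩ | ⟨h, _⟩) <;> exact h
    · intro ξ hξ
      rcases le_total 0 (inner ℝ u ξ : ℝ) with h | h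
      · exact Or.inl ⟨hξ, h⟩
      · exact Or.inr ⟨hξ, h⟩
  have hinter : volume (S ∩ S') = 0 := by
    have hsub2 : S ∩ S' ⊆ ((ℝ ∙ u)ᗮ : Submodule ℝ (EuclideanSpace ℝ (Fin n))) := by
      rintro ξ ⟨⟨_, h1⟩, ⟨_, h2⟩⟩
      rw [SetLike.mem_coe, Submodule.mem_orthogonal_singleton_iff_inner_left]
      have : (inner ℝ u ξ : ℝ) = 0 := le_antisymm h2 h1
      rwa [real_inner_comm]
    refine measure_mono_null hsub2 (Measure.addHaar_submodule _ _ ?_)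
    intro htop
    have : u ∈ ((ℝ ∙ u)ᗮ : Submodule ℝ (EuclideanSpace ℝ (Fin n))) := htop ▸ Submodule.mem_top
    have := Submodule.mem_orthogonal_singleton_iff_inner_left.1 this
    rw [huu] at this; norm_num at this
  -- 2 * vol S = vol (ball ρ)
  have hkey : 2 * volume S = volume (Metric.closedBall (0 : EuclideanSpace ℝ (Fin n)) ρ) := by
    have := measure_union_add_inter S hmeasS' (μ := volume)
    rw [hunion, hinter, add_zero, hvolS'] at this
    rw [two_mul, this]
  -- ball volumes
  have hballρ : volume (Metric.closedBall (0 : EuclideanSpace ℝ (Fin n)) ρ) = ENNReal.ofReal (ρ ^ n) * volume B := by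
    rw [Measure.addHaar_closedBall _ _ hρnn, hB,
      Measure.addHaar_closedBall _ _ (zero_le_one (α := ℝ)), finrank_euclideanSpace_fin,
      one_pow, ENNReal.ofReal_one, one_mul]
  have hBne : volume B ≠ 0 :=
    (Metric.measure_closedBall_pos volume (0 : EuclideanSpace ℝ (Fin n)) one_pos).ne'
  have hBfin : volume B ≠ ⊤ := (isCompact_closedBall _ _).measure_lt_top.ne
  -- conclude
  rw [ENNReal.div_le_iff hBne hBfin]
  have h2 : (2 : ℝ≥0∞) * volume C ≤ 2 * (ENNReal.ofReal (ρ ^ n / 2) * volume B) := by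
    have hC2 : volume C ≤ volume S := by
      calc volume C ≤ volume (c +ᵥ S) := measure_mono hsub
        _ = volume S := measure_vadd volume c S
    have hr : (2 : ℝ≥0∞) * (ENNReal.ofReal (ρ ^ n / 2) * volume B)
        = ENNReal.ofReal (ρ ^ n) * volume B := by
      rw [ENNReal.ofReal_div_of_pos two_pos, ENNReal.ofReal_ofNat, ← mul_assoc,
        ENNReal.mul_div_cancel two_ne_zero ENNReal.ofNat_ne_top]
    rw [hr, ← hballρ, ← hkey]
    exact mul_le_mul_right hC2 2
  exact (ENNReal.mul_le_mul_iff_right two_ne_zero ENNReal.ofNat_ne_top).1 h2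
end

section
/- Let C_n(ε) be the unit-ball spherical cap of height ε with base radius ρ(ε) = √(1-(1-ε)^2), and let B_n(kρ(ε)) be the n-ball of radius kρ(ε) for k > 0. Then Vol(B_n(kρ(ε))) / Vol(C_n(ε)) < k^n · (2√π / ρ(ε)) · (Γ(n/2 + 3/2) / Γ(n/2 + 1)). -/
open MeasureTheory

set_option maxHeartbeats 2000000 in
/-- Balls versus spherical caps: for the unit-ball cap `C_n(ε)` with base radius
`ρ(ε) = √(1-(1-ε)²)` and any `k > 0`,
`Vol(B_n(kρ(ε)))/Vol(C_n(ε)) < kⁿ · (2√π/ρ(ε)) · Γ(n/2+3/2)/Γ(n/2+1)`. -/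
theorem ball_vs_cap_volume
    (n : ℕ) (hn : 1 ≤ n) (x : EuclideanSpace ℝ (Fin n)) (hx : x ≠ 0)
    (ε : ℝ) (hε : 0 < ε) (hε1 : ε < 1) (k : ℝ) (hk : 0 < k) :
    volume (Metric.closedBall (0 : EuclideanSpace ℝ (Fin n))
        (k * Real.sqrt (1 - (1 - ε) ^ 2))) /
      volume (Metric.closedBall (0 : EuclideanSpace ℝ (Fin n)) 1 ∩
        {ξ | 1 - ε ≤ (inner ℝ (‖x‖⁻¹ • x) ξ : ℝ)}) <
    ENNReal.ofReal (k ^ n * (2 * Real.sqrt Real.pi / Real.sqrt (1 - (1 - ε) ^ 2)) *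
        (Real.Gamma ((n : ℝ) / 2 + 3 / 2) / Real.Gamma ((n : ℝ) / 2 + 1))) := by
  obtain ⟨m, rfl⟩ : ∃ m, n = m + 1 := ⟨n - 1, (Nat.succ_pred_eq_of_pos hn).symm⟩
  set ρ : ℝ := Real.sqrt (1 - (1 - ε) ^ 2) with hρdef
  have h1 : (0:ℝ) < 1 - (1 - ε) ^ 2 := by nlinarith
  have hρ2 : ρ ^ 2 = 1 - (1 - ε) ^ 2 := Real.sq_sqrt h1.le
  have hρpos : 0 < ρ := Real.sqrt_pos.mpr h1
  have hπ : (0:ℝ) < Real.sqrt Real.pi := Real.sqrt_pos.mpr Real.pi_pos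
  -- unit vector and reflection
  set u : EuclideanSpace ℝ (Fin (m + 1)) := (‖x‖)⁻¹ • x with hu_def
  have hu : ‖u‖ = 1 := by
    simpa using norm_smul_inv_norm (𝕜 := ℝ) hx
  set e₀ : EuclideanSpace ℝ (Fin (m + 1)) := EuclideanSpace.single 0 1 with he₀def
  have he₀ : ‖e₀‖ = 1 := by simp [he₀def]
  -- the cap with axis e₀
  set cap' : Set (EuclideanSpace ℝ (Fin (m + 1))) :=
    Metric.closedBall 0 1 ∩ {ξ | 1 - ε ≤ (inner ℝ e₀ ξ : ℝ)} with hcap'def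
  have hcap'meas : MeasurableSet cap' := by
    refine measurableSet_closedBall.inter ?_
    exact measurableSet_le measurable_const
      (Continuous.measurable (Continuous.inner continuous_const continuous_id))
  have hcapeq : volume (Metric.closedBall (0 : EuclideanSpace ℝ (Fin (m + 1))) 1 ∩
      {ξ | 1 - ε ≤ (inner ℝ u ξ : ℝ)}) = volume cap' := by
    set f := Submodule.reflection (Submodule.span ℝ {u - e₀})ᗮ with hfdef
    have hfu : f u = e₀ := Submodule.reflection_sub (by rw [hu, he₀])
    rw [← f.measurePreserving.measure_preimage hcap'meas.nullMeasurableSet]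
    congr 1
    ext ξ
    simp only [Set.mem_preimage, hcap'def, Set.mem_inter_iff, Metric.mem_closedBall,
      Set.mem_setOf_eq, dist_zero_right]
    have h2 : ‖f ξ‖ = ‖ξ‖ := f.norm_map ξ
    have h3 : (inner ℝ e₀ (f ξ) : ℝ) = inner ℝ u ξ := by
      rw [← hfu]; exact f.inner_map_map u ξ
    rw [h2, h3]
  rw [hcapeq]
  -- move to the pi type
  set P : Set (Fin (m + 1) → ℝ) := {y | (∑ i, y i ^ 2) ≤ 1 ∧ 1 - ε ≤ y 0} with hPdef
  have hPmeas : MeasurableSet P := by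
    refine MeasurableSet.inter ?_ ?_
    · exact measurableSet_le
        (Finset.measurable_sum _ fun i _ => (measurable_pi_apply i).pow_const 2)
        measurable_const
    · exact measurableSet_le measurable_const (measurable_pi_apply 0)
  have hcap2 : volume cap' = volume P := by
    rw [← (EuclideanSpace.volume_preserving_symm_measurableEquiv_toLp (Fin (m + 1))).measure_preimage
      hPmeas.nullMeasurableSet]
    congr 1
    ext ξ
    have happ : ∀ i, (MeasurableEquiv.toLp 2 (Fin (m + 1) → ℝ)).symm ξ i = ξ i := fun i => rfl
    simp only [Set.mem_preimage, hPdef, Set.mem_setOf_eq, happ, hcap'def, Set.mem_inter_iff,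
      Metric.mem_closedBall, dist_zero_right]
    have hnorm : ‖ξ‖ ≤ 1 ↔ (∑ i, ξ i ^ 2) ≤ 1 := by
      rw [EuclideanSpace.norm_eq]
      have heq : ∑ i, ‖ξ i‖ ^ 2 = ∑ i, ξ i ^ 2 := by simp [Real.norm_eq_abs, sq_abs]
      rw [heq]
      have hnn : (0:ℝ) ≤ ∑ i, ξ i ^ 2 := Finset.sum_nonneg fun i _ => sq_nonneg _
      constructor
      · intro h
        calc ∑ i, ξ i ^ 2 = Real.sqrt (∑ i, ξ i ^ 2) ^ 2 := (Real.sq_sqrt hnn).symm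
          _ ≤ 1 := by nlinarith [Real.sqrt_nonneg (∑ i, ξ i ^ 2)]
      · intro h
        rw [show (1:ℝ) = Real.sqrt 1 by simp]
        exact Real.sqrt_le_sqrt h
    have hin : (inner ℝ e₀ ξ : ℝ) = ξ 0 := by
      simp [he₀def, EuclideanSpace.inner_single_left]
    rw [hnorm, hin]
  rw [hcap2]
  -- move to the product type
  set Q : Set (ℝ × (Fin m → ℝ)) := {p | p.1 ^ 2 + ∑ i, p.2 i ^ 2 ≤ 1 ∧ 1 - ε ≤ p.1} with hQdef
  have hQmeas : MeasurableSet Q := by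
    refine MeasurableSet.inter ?_ ?_
    · exact measurableSet_le
        ((measurable_fst.pow_const 2).add (Finset.measurable_sum _ fun i _ =>
          ((measurable_pi_apply i).comp measurable_snd).pow_const 2))
        measurable_const
    · exact measurableSet_le measurable_const measurable_fst
  have hcap3 : volume P = volume Q := by
    rw [← (volume_preserving_piFinSuccAbove (fun _ : Fin (m + 1) => ℝ) 0).measure_preimage
      hQmeas.nullMeasurableSet]
    congr 1
    ext y
    simp only [Set.mem_preimage, MeasurableEquiv.piFinSuccAbove_apply, hQdef, hPdef,
      Set.mem_setOf_eq, Fin.insertNthEquiv_symm_apply]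
    rw [Fin.sum_univ_succAbove (fun i => y i ^ 2) 0]
    rfl
  rw [hcap3]
  -- the sub-region of the cap
  set g : ℝ → ℝ := fun t => ρ ^ 2 * (1 - t) / ε with hgdef
  set S : Set (ℝ × (Fin m → ℝ)) :=
    {p | p.1 ∈ Set.Icc (1 - ε) 1 ∧ ∑ i, p.2 i ^ 2 ≤ g p.1} with hSdef
  have hSmeas : MeasurableSet S := by
    refine MeasurableSet.inter (measurable_fst measurableSet_Icc) ?_
    exact measurableSet_le
      (Finset.measurable_sum _ fun i _ =>
        ((measurable_pi_apply i).comp measurable_snd).pow_const 2)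
      (((measurable_fst.const_sub 1).const_mul _).div_const _)
  have hSQ : S ⊆ Q := by
    rintro ⟨t, y⟩ ⟨⟨ht1, ht2⟩, hy⟩
    refine ⟨?_, ht1⟩
    have hgle : g t ≤ 1 - t ^ 2 := by
      rw [hgdef]
      simp only []
      rw [div_le_iff₀ hε, hρ2]
      nlinarith [mul_nonneg (mul_nonneg hε.le (sub_nonneg.mpr ht2))
        (sub_nonneg.mpr ht1)]
    show t ^ 2 + (∑ i, y i ^ 2) ≤ 1
    nlinarith [hy, hgle]
  -- slice volumes
  set C : ENNReal := ENNReal.ofReal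
    (Real.sqrt Real.pi ^ m / Real.Gamma ((m : ℝ) / 2 + 1)) with hCdef
  have hΓm : 0 < Real.Gamma ((m : ℝ) / 2 + 1) := Real.Gamma_pos_of_pos (by positivity)
  have hslice : ∀ t ∈ Set.Icc (1 - ε) 1,
      volume {y : Fin m → ℝ | ∑ i, y i ^ 2 ≤ g t}
        = ENNReal.ofReal ((ρ * Real.sqrt ((1 - t) / ε)) ^ m) * C := by
    rintro t ⟨ht1, ht2⟩
    set r : ℝ := ρ * Real.sqrt ((1 - t) / ε) with hrdef
    have hr0 : 0 ≤ r := mul_nonneg hρpos.le (Real.sqrt_nonneg _)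
    have hr2 : r ^ 2 = g t := by
      rw [hrdef, mul_pow, Real.sq_sqrt (div_nonneg (by linarith) hε.le), hgdef]
      ring
    rcases Nat.eq_zero_or_pos m with hm | hm
    · subst hm
      have hset : {y : Fin 0 → ℝ | ∑ i, y i ^ 2 ≤ g t} = Set.univ := by
        ext y
        simp only [Finset.univ_eq_empty, Finset.sum_empty, Set.mem_setOf_eq, Set.mem_univ,
          iff_true, hgdef]
        exact div_nonneg (mul_nonneg (sq_nonneg _) (by linarith)) hε.le
      rw [hset]
      have huniv : (volume : Measure (Fin 0 → ℝ)) Set.univ = 1 := by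
        rw [volume_pi, Measure.pi_univ]
        simp
      rw [huniv, hCdef]
      norm_num [Real.Gamma_one]
    haveI : Nonempty (Fin m) := ⟨⟨0, hm⟩⟩
    have hmeasA : MeasurableSet {y : Fin m → ℝ | ∑ i, y i ^ 2 ≤ g t} :=
      measurableSet_le
        (Finset.measurable_sum _ fun i _ => (measurable_pi_apply i).pow_const 2)
        measurable_const
    rw [← (EuclideanSpace.volume_preserving_symm_measurableEquiv_toLp (Fin m)).measure_preimage
      hmeasA.nullMeasurableSet]
    have hpre : (⇑(MeasurableEquiv.toLp 2 (Fin m → ℝ)).symm ⁻¹'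
        {y : Fin m → ℝ | ∑ i, y i ^ 2 ≤ g t}) = Metric.closedBall 0 r := by
      ext ξ
      have happ : ∀ i, (MeasurableEquiv.toLp 2 (Fin m → ℝ)).symm ξ i = ξ i := fun i => rfl
      simp only [Set.mem_preimage, Set.mem_setOf_eq, happ, Metric.mem_closedBall,
        dist_zero_right]
      rw [EuclideanSpace.norm_eq]
      have heq : ∑ i, ‖ξ i‖ ^ 2 = ∑ i, ξ i ^ 2 := by simp [Real.norm_eq_abs, sq_abs]
      rw [heq, ← hr2]
      have hnn : (0:ℝ) ≤ ∑ i, ξ i ^ 2 := Finset.sum_nonneg fun i _ => sq_nonneg _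
      constructor
      · intro h
        exact (Real.sqrt_le_sqrt h).trans_eq (Real.sqrt_sq hr0)
      · intro h
        calc ∑ i, ξ i ^ 2 = Real.sqrt (∑ i, ξ i ^ 2) ^ 2 := (Real.sq_sqrt hnn).symm
          _ ≤ r ^ 2 := by nlinarith [Real.sqrt_nonneg (∑ i, ξ i ^ 2)]
    rw [hpre, EuclideanSpace.volume_closedBall, Fintype.card_fin,
      ← ENNReal.ofReal_pow hr0, hCdef]
  -- volume of S as an integral
  have hvolS : volume S = (∫⁻ t in Set.Icc (1 - ε) 1,
      ENNReal.ofReal ((ρ * Real.sqrt ((1 - t) / ε)) ^ m)) * C := by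
    rw [Measure.volume_eq_prod, Measure.prod_apply hSmeas]
    have hmf : Measurable fun t : ℝ => ENNReal.ofReal ((ρ * Real.sqrt ((1 - t) / ε)) ^ m) :=
      ((continuous_const.mul (Real.continuous_sqrt.comp
        (by fun_prop))).pow m).measurable.ennreal_ofReal
    rw [← lintegral_mul_const _ hmf, ← lintegral_indicator measurableSet_Icc]
    congr 1
    funext t
    by_cases ht : t ∈ Set.Icc (1 - ε) 1
    · rw [Set.indicator_of_mem ht]
      have hpre2 : Prod.mk t ⁻¹' S = {y : Fin m → ℝ | ∑ i, y i ^ 2 ≤ g t} := by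
        ext y
        exact ⟨fun h => h.2, fun h => ⟨ht, h⟩⟩
      rw [hpre2, hslice t ht]
    · rw [Set.indicator_of_notMem ht]
      have hpre2 : Prod.mk t ⁻¹' S = ∅ := by
        ext y
        simp only [Set.mem_empty_iff_false, iff_false]
        exact fun h => ht h.1
      rw [hpre2]
      simp
  -- compute the integral
  have hfin : (∫⁻ t in Set.Icc (1 - ε) 1,
      ENNReal.ofReal ((ρ * Real.sqrt ((1 - t) / ε)) ^ m))
        = ENNReal.ofReal (ρ ^ m * ε / ((m : ℝ) / 2 + 1)) := by
    have hcont : Continuous fun t : ℝ => (ρ * Real.sqrt ((1 - t) / ε)) ^ m :=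
      (continuous_const.mul (Real.continuous_sqrt.comp (by fun_prop))).pow m
    rw [← ofReal_integral_eq_lintegral_ofReal (hcont.integrableOn_Icc)
      (Filter.Eventually.of_forall fun t =>
        pow_nonneg (mul_nonneg hρpos.le (Real.sqrt_nonneg _)) m)]
    congr 1
    rw [MeasureTheory.integral_Icc_eq_integral_Ioc,
      ← intervalIntegral.integral_of_le (by linarith : 1 - ε ≤ 1)]
    have h2 : (∫ s in (1 - ε)..1, (ρ * Real.sqrt ((1 - s) / ε)) ^ m)
        = ∫ s in (0:ℝ)..ε, (ρ * Real.sqrt (s / ε)) ^ m := by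
      have h := intervalIntegral.integral_comp_sub_left (a := 1 - ε) (b := 1)
        (fun s => (ρ * Real.sqrt (s / ε)) ^ m) 1
      rw [show (1:ℝ) - 1 = 0 by ring, show (1:ℝ) - (1 - ε) = ε by ring] at h
      exact h
    rw [h2]
    have h3 : Set.EqOn (fun s => (ρ * Real.sqrt (s / ε)) ^ m)
        (fun s => (ρ ^ m / ε ^ ((m : ℝ) / 2)) * s ^ ((m : ℝ) / 2)) (Set.uIcc 0 ε) := by
      intro s hs
      rw [Set.uIcc_of_le hε.le] at hs
      obtain ⟨hs0, hsε⟩ := hs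
      have hsqrt : Real.sqrt (s / ε) ^ m = s ^ ((m : ℝ) / 2) / ε ^ ((m : ℝ) / 2) := by
        rw [Real.sqrt_eq_rpow, ← Real.rpow_natCast ((s / ε) ^ ((1:ℝ)/2)) m,
          ← Real.rpow_mul (div_nonneg hs0 hε.le),
          Real.div_rpow hs0 hε.le]
        norm_num
        rw [show (1:ℝ)/2 * (m:ℝ) = (m:ℝ)/2 by ring]
      simp only [mul_pow, hsqrt]
      ring
    rw [intervalIntegral.integral_congr h3, intervalIntegral.integral_const_mul,
      integral_rpow (Or.inl (lt_of_lt_of_le (by norm_num) (by positivity : (0:ℝ) ≤ (m : ℝ) / 2))),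
      Real.zero_rpow (by positivity : (0:ℝ) < (m : ℝ) / 2 + 1).ne', sub_zero]
    have hεr : ε ^ ((m : ℝ) / 2 + 1) = ε ^ ((m : ℝ) / 2) * ε := by
      rw [Real.rpow_add hε, Real.rpow_one]
    rw [hεr]
    have hεne : ε ^ ((m : ℝ) / 2) ≠ 0 := by positivity
    field_simp
  -- lower bound for the cap volume
  set L₀ : ℝ := ρ ^ m * ε / ((m : ℝ) / 2 + 1) *
    (Real.sqrt Real.pi ^ m / Real.Gamma ((m : ℝ) / 2 + 1)) with hL₀def
  have hL₀pos : 0 < L₀ := by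
    rw [hL₀def]
    positivity
  have hlow : ENNReal.ofReal L₀ ≤ volume Q := by
    have : ENNReal.ofReal L₀ = volume S := by
      rw [hvolS, hfin, hCdef, hL₀def, ENNReal.ofReal_mul (by positivity)]
    rw [this]
    exact measure_mono hSQ
  -- the ball volume
  have hball : volume (Metric.closedBall (0 : EuclideanSpace ℝ (Fin (m + 1))) (k * ρ))
      = ENNReal.ofReal ((k * ρ) ^ (m + 1) *
        (Real.sqrt Real.pi ^ (m + 1) / Real.Gamma ((↑(m + 1) : ℝ) / 2 + 1))) := by
    have hΓ₁ : 0 < Real.Gamma ((↑(m + 1) : ℝ) / 2 + 1) :=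
      Real.Gamma_pos_of_pos (by positivity)
    rw [EuclideanSpace.volume_closedBall, Fintype.card_fin,
      ENNReal.ofReal_mul (by positivity : (0:ℝ) ≤ (k * ρ) ^ (m + 1)),
      ENNReal.ofReal_pow (by positivity : (0:ℝ) ≤ k * ρ)]
  -- final computation
  have hΓ₁ : 0 < Real.Gamma ((↑(m + 1) : ℝ) / 2 + 1) :=
    Real.Gamma_pos_of_pos (by positivity)
  have hΓ₂eq : Real.Gamma ((↑(m + 1) : ℝ) / 2 + 3 / 2)
      = ((m : ℝ) / 2 + 1) * Real.Gamma ((m : ℝ) / 2 + 1) := by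
    have harg : ((m + 1 : ℕ) : ℝ) / 2 + 3 / 2 = ((m : ℝ) / 2 + 1) + 1 := by
      push_cast; ring
    rw [harg, Real.Gamma_add_one (by positivity)]
  have hΓ₂pos : 0 < Real.Gamma ((↑(m + 1) : ℝ) / 2 + 3 / 2) := by
    rw [hΓ₂eq]; positivity
  calc volume (Metric.closedBall (0 : EuclideanSpace ℝ (Fin (m + 1))) (k * ρ)) / volume Q
      ≤ volume (Metric.closedBall (0 : EuclideanSpace ℝ (Fin (m + 1))) (k * ρ)) /
        ENNReal.ofReal L₀ := ENNReal.div_le_div_left hlow _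
    _ < ENNReal.ofReal (k ^ (m + 1) * (2 * Real.sqrt Real.pi / ρ) *
        (Real.Gamma ((↑(m + 1) : ℝ) / 2 + 3 / 2) / Real.Gamma ((↑(m + 1) : ℝ) / 2 + 1))) := by
      rw [ENNReal.div_lt_iff (Or.inl (ENNReal.ofReal_pos.mpr hL₀pos).ne')
        (Or.inl ENNReal.ofReal_ne_top), hball,
        ← ENNReal.ofReal_mul (mul_nonneg (mul_nonneg (by positivity)
          (by positivity)) (div_nonneg hΓ₂pos.le hΓ₁.le))]
      refine (ENNReal.ofReal_lt_ofReal_iff_of_nonneg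
        (mul_nonneg (by positivity) (div_nonneg (by positivity) hΓ₁.le))).mpr ?_
      have hA : 0 < k ^ (m + 1) * Real.sqrt Real.pi ^ (m + 1) * ρ ^ m /
          Real.Gamma ((↑(m + 1) : ℝ) / 2 + 1) := by positivity
      have e1 : (k * ρ) ^ (m + 1) *
          (Real.sqrt Real.pi ^ (m + 1) / Real.Gamma ((↑(m + 1) : ℝ) / 2 + 1))
          = (k ^ (m + 1) * Real.sqrt Real.pi ^ (m + 1) * ρ ^ m /
            Real.Gamma ((↑(m + 1) : ℝ) / 2 + 1)) * ρ := by
        rw [mul_pow, pow_succ k m]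
        field_simp
        ring
      have e2 : k ^ (m + 1) * (2 * Real.sqrt Real.pi / ρ) *
          (Real.Gamma ((↑(m + 1) : ℝ) / 2 + 3 / 2) / Real.Gamma ((↑(m + 1) : ℝ) / 2 + 1)) * L₀
          = (k ^ (m + 1) * Real.sqrt Real.pi ^ (m + 1) * ρ ^ m /
            Real.Gamma ((↑(m + 1) : ℝ) / 2 + 1)) * (2 * ε / ρ) := by
        rw [hL₀def, hΓ₂eq, pow_succ (Real.sqrt Real.pi) m]
        have hd : ((m : ℝ) / 2 + 1) ≠ 0 := by positivity
        field_simp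
      rw [e1, e2]
      refine mul_lt_mul_of_pos_left ?_ hA
      rw [lt_div_iff₀ hρpos]
      nlinarith [hρ2]
end

section
/- Let x_1, ..., x_N be i.i.d. random vectors uniformly distributed on the cube [-1,1]^n, so that R_0^2 = n/3. Fix 0 < ε < 1 and define h(x) = ⟨x/R_0, x_N/R_0⟩ - 1 + ε. Then P(h(x_N) ≥ 0 and h(x_i) < 0 for all i = 1,...,N-1) ≥ 1 - exp(-(2/9) n ε^2) - (N-1) exp(-(1/18) n (1-ε)^2). -/
open MeasureTheory ProbabilityTheory Real

noncomputable def nuU : Measure ℝ := (2 : ENNReal)⁻¹ • volume.restrict (Set.Icc (-1 : ℝ) 1)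


instance : IsProbabilityMeasure nuU := by
  constructor
  simp [nuU, Real.volume_Icc]
  rw [show (1 : ℝ) + 1 = 2 by norm_num, ← ENNReal.ofReal_ofNat,
    ENNReal.ofReal_ofNat, ENNReal.inv_mul_cancel] <;> simp

lemma nuU_integral_eq (f : ℝ → ℝ) :
    ∫ u, f u ∂nuU = (1/2) * ∫ u in (-1 : ℝ)..1, f u := by
  rw [nuU, integral_smul_measure, intervalIntegral.integral_of_le (by norm_num),
    ← MeasureTheory.integral_Icc_eq_integral_Ioc]
  norm_num

lemma nuU_integrable (f : ℝ → ℝ) (hf : Continuous f) : Integrable f nuU :=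
  (hf.integrableOn_Icc).smul_measure (by simp)

lemma exp_neg_le_quadratic {x : ℝ} (hx : 0 ≤ x) : Real.exp (-x) ≤ 1 - x + x^2/2 := by
  have key : ∀ y ∈ Set.Ici (0:ℝ), 1 ≤ (1 - y + y^2/2) * Real.exp y := by
    have hmono : MonotoneOn (fun y => (1 - y + y^2/2) * Real.exp y) (Set.Ici (0:ℝ)) := by
      apply monotoneOn_of_deriv_nonneg (convex_Ici 0)
      · exact (Continuous.continuousOn (by continuity))
      · intro y hy
        exact (((differentiable_const 1).sub differentiable_fun_id).add
          ((differentiable_fun_id.pow 2).div_const 2)).differentiableAt.mul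
          (Real.differentiable_exp y) |>.differentiableWithinAt
      · intro y hy
        have h1 : HasDerivAt (fun y : ℝ => (1 - y + y^2/2) * Real.exp y)
            ((-1 + y) * Real.exp y + (1 - y + y^2/2) * Real.exp y) y := by
          have ha : HasDerivAt (fun y : ℝ => 1 - y + y^2/2) (-1 + y) y := by
            have := ((hasDerivAt_id y).const_sub 1).add (((hasDerivAt_id y).pow 2).div_const 2)
            simpa [mul_comm, Pi.add_def] using this
          simpa [Pi.mul_def] using ha.mul (Real.hasDerivAt_exp y)
        rw [h1.deriv]
        have : (-1 + y) * Real.exp y + (1 - y + y^2/2) * Real.exp y = y^2/2 * Real.exp y := by ring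
        rw [this]
        positivity
    intro y hy
    have := hmono (Set.self_mem_Ici) hy (by exact hy)
    simpa using this
  have h := key x hx
  rw [Real.exp_neg]
  rw [inv_le_iff_one_le_mul₀ (Real.exp_pos x)]
  linarith [h]


lemma nuU_ae_mem : ∀ᵐ u ∂nuU, u ∈ Set.Icc (-1 : ℝ) 1 := by
  rw [nuU]
  exact Measure.ae_smul_measure (ae_restrict_mem measurableSet_Icc) _

lemma intInt {f : ℝ → ℝ} (hf : Continuous f) : IntervalIntegrable f volume (-1) 1 :=
  hf.intervalIntegrable _ _

lemma nuU_exp_mul_le (c : ℝ) : ∫ u, Real.exp (c * u) ∂nuU ≤ Real.exp (c^2/2) := by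
  have hle : ∫ u, Real.exp (c * u) ∂nuU
      ≤ ∫ u, ((1-u)/2 * Real.exp (-c) + (1+u)/2 * Real.exp c) ∂nuU := by
    apply integral_mono_ae (nuU_integrable _ (by continuity)) (nuU_integrable _ (by continuity))
    filter_upwards [nuU_ae_mem] with u hu
    have h := convexOn_exp.2 (Set.mem_univ (-c)) (Set.mem_univ c)
      (by linarith [hu.2] : (0:ℝ) ≤ (1-u)/2) (by linarith [hu.1] : (0:ℝ) ≤ (1+u)/2)
      (by ring)
    have he : ((1-u)/2) • (-c) + ((1+u)/2) • c = c * u := by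
      rw [smul_eq_mul, smul_eq_mul]; ring
    rw [he] at h
    calc Real.exp (c*u) ≤ ((1-u)/2) • Real.exp (-c) + ((1+u)/2) • Real.exp c := h
      _ = (1-u)/2 * Real.exp (-c) + (1+u)/2 * Real.exp c := by
          rw [smul_eq_mul, smul_eq_mul]
  refine hle.trans ?_
  rw [nuU_integral_eq]
  have hrw : ∀ u : ℝ, (1-u)/2 * Real.exp (-c) + (1+u)/2 * Real.exp c
      = (Real.exp c + Real.exp (-c))/2 + (Real.exp c - Real.exp (-c))/2 * u := by
    intro u; ring
  simp_rw [hrw]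
  have eid : ∫ u in (-1:ℝ)..1, u = 0 := by rw [integral_id]; norm_num
  have ec : ∫ _u in (-1:ℝ)..1, ((Real.exp c + Real.exp (-c))/2)
      = Real.exp c + Real.exp (-c) := by
    rw [intervalIntegral.integral_const]; norm_num; ring
  rw [intervalIntegral.integral_add (intervalIntegrable_const)
    ((intervalIntegral.intervalIntegrable_id).const_mul _),
    intervalIntegral.integral_const_mul, eid, ec]
  have : (1/2 : ℝ) * (Real.exp c + Real.exp (-c) + (Real.exp c - Real.exp (-c))/2 * 0)
      = Real.cosh c := by rw [Real.cosh_eq]; ring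
  rw [this]
  exact Real.cosh_le_exp_half_sq c

lemma nuU_exp_neg_sq_le {l : ℝ} (hl : 0 ≤ l) :
    ∫ u, Real.exp (-(l * u^2)) ∂nuU ≤ Real.exp (-l/3 + l^2/8) := by
  have hle : ∫ u, Real.exp (-(l * u^2)) ∂nuU
      ≤ ∫ u, (1 - l * u^2 + l^2/2 * u^4) ∂nuU := by
    apply integral_mono (nuU_integrable _ (by continuity)) (nuU_integrable _ (by continuity))
    intro u
    have := exp_neg_le_quadratic (show (0:ℝ) ≤ l * u^2 by positivity)
    calc Real.exp (-(l * u^2)) ≤ 1 - l * u^2 + (l * u^2)^2/2 := this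
      _ = 1 - l * u^2 + l^2/2 * u^4 := by ring
  refine hle.trans ?_
  rw [nuU_integral_eq]
  have h1 : ∫ u in (-1:ℝ)..1, (1 - l * u^2 + l^2/2 * u^4)
      = (∫ u in (-1:ℝ)..1, (1:ℝ)) - (∫ u in (-1:ℝ)..1, l * u^2) + ∫ u in (-1:ℝ)..1, l^2/2 * u^4 := by
    rw [intervalIntegral.integral_add (((intInt (by continuity)).sub (intInt (by continuity))))
      (intInt (by continuity)), intervalIntegral.integral_sub (intInt (by continuity)) (intInt (by continuity))]
  have e0 : ∫ _u in (-1:ℝ)..1, (1:ℝ) = 2 := by rw [intervalIntegral.integral_const]; norm_num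
  have e2 : ∫ u in (-1:ℝ)..1, u^2 = 2/3 := by rw [integral_pow]; norm_num
  have e4 : ∫ u in (-1:ℝ)..1, u^4 = 2/5 := by rw [integral_pow]; norm_num
  rw [h1, intervalIntegral.integral_const_mul, intervalIntegral.integral_const_mul,
    e0, e2, e4]
  have h2 : (1/2 : ℝ) * (2 - l * (2/3) + l^2/2 * (2/5)) = 1 + (-l/3 + l^2/10) := by ring
  rw [h2]
  have h3 : 1 + (-l/3 + l^2/10) ≤ Real.exp (-l/3 + l^2/10) := by
    linarith [Real.add_one_le_exp (-l/3 + l^2/10)]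
  refine h3.trans (Real.exp_le_exp.2 ?_)
  nlinarith [sq_nonneg l]


theorem my_integral_pi {n : ℕ} (ν : Measure ℝ) [SigmaFinite ν] (f : Fin n → ℝ → ℝ) :
    ∫ x : Fin n → ℝ, ∏ i, f i (x i) ∂(Measure.pi fun _ => ν) = ∏ i, ∫ x, f i x ∂ν := by
  induction n with
  | zero =>
      simp only [Finset.univ_eq_empty, Finset.prod_empty, integral_const,
        Measure.pi_empty_univ, ENNReal.toReal_one, measureReal_def, smul_eq_mul, mul_one, one_smul]
  | succ n n_ih =>
      calc
        _ = ∫ x : ℝ × (Fin n → ℝ), f 0 x.1 * ∏ i : Fin n, f (Fin.succ i) (x.2 i)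
            ∂(ν.prod (Measure.pi fun _ => ν)) := by
          rw [← ((measurePreserving_piFinSuccAbove (fun _ : Fin (n+1) => ν) 0).symm).integral_comp']
          simp_rw [MeasurableEquiv.piFinSuccAbove_symm_apply, Fin.insertNthEquiv,
            Fin.prod_univ_succ, Fin.insertNth_zero, Equiv.coe_fn_mk]
          simp only [Fin.cons_zero, Fin.cons_succ, cast_eq]
        _ = (∫ x, f 0 x ∂ν) * ∏ i : Fin n, ∫ x, f (Fin.succ i) x ∂ν := by
          rw [← n_ih, ← integral_prod_mul]
        _ = ∏ i, ∫ x, f i x ∂ν := by rw [Fin.prod_univ_succ]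

theorem my_integrable_pi {n : ℕ} (ν : Measure ℝ) [IsProbabilityMeasure ν] (f : Fin n → ℝ → ℝ)
    (hf : ∀ i, Integrable (f i) ν) :
    Integrable (fun v : Fin n → ℝ => ∏ i, f i (v i)) (Measure.pi fun _ => ν) := by
  induction n with
  | zero => simpa using integrable_const (1 : ℝ)
  | succ n n_ih =>
      have hmp := ((measurePreserving_piFinSuccAbove (fun _ : Fin (n+1) => ν) 0).symm)
      rw [← hmp.integrable_comp_emb (MeasurableEquiv.measurableEmbedding _)]
      simp_rw [MeasurableEquiv.piFinSuccAbove_symm_apply, Fin.insertNthEquiv,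
        Fin.prod_univ_succ, Fin.insertNth_zero]
      simp only [Fin.zero_succAbove, Function.comp_def, Equiv.coe_fn_mk, Fin.cons_zero,
        Fin.cons_succ]
      exact Integrable.mul_prod (hf 0) (n_ih (fun i => f (Fin.succ i)) (fun i => hf _))

lemma markov_exp {α : Type*} [MeasurableSpace α] (ρ : Measure α) [IsProbabilityMeasure ρ]
    {g : α → ℝ} (hg : Integrable g ρ) (hg0 : ∀ a, 0 ≤ g a) (s : Set α)
    (hs : ∀ a ∈ s, 1 ≤ g a) :
    (ρ s).toReal ≤ ∫ a, g a ∂ρ := by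
  have h2 := mul_meas_ge_le_integral_of_nonneg (ae_of_all _ hg0) hg 1
  simp only [one_mul] at h2
  refine le_trans ?_ h2
  exact ENNReal.toReal_mono (measure_ne_top _ _) (measure_mono (fun a ha => hs a ha))

noncomputable def muU (n : ℕ) : Measure (Fin n → ℝ) := Measure.pi fun _ => nuU

instance (n : ℕ) : IsProbabilityMeasure (muU n) := by
  unfold muU; infer_instance

lemma cube_full (n : ℕ) : muU n (Set.pi Set.univ fun _ => Set.Icc (-1:ℝ) 1) = 1 := by
  rw [muU, Measure.pi_pi]
  simp [show nuU (Set.Icc (-1:ℝ) 1) = 1 from ?_]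
  · rw [nuU]
    simp [Real.volume_Icc]
    rw [show (1 : ℝ) + 1 = 2 by norm_num, ← ENNReal.ofReal_ofNat,
      ENNReal.ofReal_ofNat, ENNReal.inv_mul_cancel] <;> simp

set_option maxHeartbeats 1000000 in
theorem chernoffA (n : ℕ) (ε : ℝ) (hε : 0 < ε) (hε1 : ε < 1) :
    ((muU n) {v | ∑ j, v j * v j ≤ (1-ε)*((n:ℝ)/3)}).toReal
      ≤ Real.exp (-(2/9*n*ε^2)) := by
  set l : ℝ := 4*ε/3 with hl
  have hl0 : 0 ≤ l := by positivity
  set g : (Fin n → ℝ) → ℝ :=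
    fun v => ∏ j, (Real.exp (l*(1-ε)/3) * Real.exp (-(l * (v j * v j)))) with hg
  have hgexp : ∀ v, g v = Real.exp (∑ j : Fin n, (l*(1-ε)/3 + -(l * (v j * v j)))) := by
    intro v
    rw [Real.exp_sum, hg]
    exact Finset.prod_congr rfl fun j _ => (Real.exp_add _ _).symm
  have hg0 : ∀ v, 0 ≤ g v := fun v => by rw [hgexp]; positivity
  have hgint : Integrable g (muU n) := by
    rw [hg]; simp only [muU]
    exact my_integrable_pi nuU (fun _ u => Real.exp (l*(1-ε)/3) * Real.exp (-(l * (u*u))))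
      (fun i => nuU_integrable _ (by continuity))
  have hsum : ∀ v : Fin n → ℝ, ∑ j : Fin n, (l*(1-ε)/3 + -(l * (v j * v j)))
      = n * (l*(1-ε)/3) - l * ∑ j, v j * v j := by
    intro v
    rw [Finset.sum_add_distrib, Finset.sum_const, Finset.card_univ, Fintype.card_fin,
      nsmul_eq_mul]
    have : ∑ j : Fin n, -(l * (v j * v j)) = -(l * ∑ j, v j * v j) := by
      rw [Finset.mul_sum, ← Finset.sum_neg_distrib]
    rw [this]; ring
  have hmark := markov_exp (muU n) hgint hg0 {v | ∑ j, v j * v j ≤ (1-ε)*((n:ℝ)/3)}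
    (fun v hv => by
      rw [hgexp, hsum]
      refine Real.one_le_exp ?_
      have hv' : (∑ j, v j * v j) ≤ (1-ε)*((n:ℝ)/3) := hv
      have h2 : l * (∑ j, v j * v j) ≤ l * ((1-ε)*((n:ℝ)/3)) :=
        mul_le_mul_of_nonneg_left hv' hl0
      have h3 : l * ((1-ε)*((n:ℝ)/3)) = n * (l*(1-ε)/3) := by ring
      linarith)
  refine hmark.trans ?_
  rw [hg]; simp only [muU]; rw [my_integral_pi nuU (fun _ u => Real.exp (l*(1-ε)/3) * Real.exp (-(l * (u*u))))]
  have hfac : ∫ u, Real.exp (l*(1-ε)/3) * Real.exp (-(l * (u * u))) ∂nuU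
      ≤ Real.exp (-(2/9*ε^2)) := by
    rw [integral_const_mul]
    have hsq : ∀ u : ℝ, Real.exp (-(l * (u * u))) = Real.exp (-(l * u^2)) := by
      intro u; rw [sq]
    simp_rw [hsq]
    calc Real.exp (l*(1-ε)/3) * ∫ u, Real.exp (-(l * u^2)) ∂nuU
        ≤ Real.exp (l*(1-ε)/3) * Real.exp (-l/3 + l^2/8) :=
          mul_le_mul_of_nonneg_left (nuU_exp_neg_sq_le hl0) (Real.exp_pos _).le
      _ = Real.exp (l*(1-ε)/3 + (-l/3 + l^2/8)) := (Real.exp_add _ _).symm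
      _ = Real.exp (-(2/9*ε^2)) := by rw [hl]; congr 1; ring
  calc ∏ _j : Fin n, ∫ u, Real.exp (l*(1-ε)/3) * Real.exp (-(l * (u * u))) ∂nuU
      = (∫ u, Real.exp (l*(1-ε)/3) * Real.exp (-(l * (u * u))) ∂nuU) ^ n := by
        rw [Finset.prod_const, Finset.card_univ, Fintype.card_fin]
    _ ≤ (Real.exp (-(2/9*ε^2))) ^ n := by
        refine pow_le_pow_left₀ ?_ hfac n
        exact integral_nonneg fun u => by positivity
    _ = Real.exp (-(2/9*n*ε^2)) := by
        rw [← Real.exp_nat_mul]; congr 1; push_cast; ring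

lemma cube_compl_null (n : ℕ) :
    muU n (Set.pi Set.univ fun _ : Fin n => Set.Icc (-1:ℝ) 1)ᶜ = 0 := by
  rw [measure_compl (MeasurableSet.univ_pi fun _ => measurableSet_Icc) (measure_ne_top _ _),
    cube_full n]
  simp

set_option maxHeartbeats 1000000 in
theorem chernoffB (n : ℕ) (ε : ℝ) (hε : 0 < ε) (hε1 : ε < 1) :
    (((muU n).prod (muU n)) {p : (Fin n → ℝ) × (Fin n → ℝ) |
        (1-ε)*((n:ℝ)/3) ≤ ∑ j, p.2 j * p.1 j}).toReal
      ≤ Real.exp (-(1/18*n*(1-ε)^2)) := by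
  set b : ℝ := (1-ε)/3 with hb
  have hb0 : 0 ≤ b := by rw [hb]; linarith
  set t : ℝ := (1-ε)*((n:ℝ)/3) with ht
  set C : ℝ := Real.exp (-(b * t)) with hC
  set g : (Fin n → ℝ) × (Fin n → ℝ) → ℝ :=
    fun p => C * ∏ j, Real.exp ((b * p.1 j) * p.2 j) with hg
  have hgexp : ∀ p, g p = Real.exp (-(b * t) + ∑ j : Fin n, (b * p.1 j) * p.2 j) := by
    intro p
    rw [hg, Real.exp_add, hC, Real.exp_sum]
  have hg0 : ∀ p, 0 ≤ g p := fun p => by rw [hgexp]; positivity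
  have hcont : Continuous g := by
    rw [hg]
    refine continuous_const.mul (continuous_finset_prod _ fun j _ => ?_)
    exact ((continuous_const.mul ((continuous_apply j).comp continuous_fst)).mul
      ((continuous_apply j).comp continuous_snd)).rexp
  set S : Set (Fin n → ℝ) := Set.pi Set.univ fun _ : Fin n => Set.Icc (-1:ℝ) 1 with hS
  have hprodnull : ((muU n).prod (muU n)) (S ×ˢ S)ᶜ = 0 := by
    have hsub : (S ×ˢ S)ᶜ ⊆ (Sᶜ ×ˢ (Set.univ : Set (Fin n → ℝ))) ∪ (Set.univ ×ˢ Sᶜ) := by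
      intro p hp
      simp only [Set.mem_compl_iff, Set.mem_prod, not_and_or] at hp
      rcases hp with h | h
      · exact Or.inl ⟨h, Set.mem_univ _⟩
      · exact Or.inr ⟨Set.mem_univ _, h⟩
    refine measure_mono_null hsub ?_
    refine le_antisymm ?_ zero_le
    calc ((muU n).prod (muU n)) ((Sᶜ ×ˢ Set.univ) ∪ (Set.univ ×ˢ Sᶜ))
        ≤ ((muU n).prod (muU n)) (Sᶜ ×ˢ Set.univ)
          + ((muU n).prod (muU n)) (Set.univ ×ˢ Sᶜ) := measure_union_le _ _
      _ = 0 := by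
          rw [Measure.prod_prod, Measure.prod_prod, cube_compl_null]
          simp
  have hae : ∀ᵐ p ∂((muU n).prod (muU n)), p ∈ S ×ˢ S := mem_ae_iff.2 hprodnull
  have hbnd : ∀ p ∈ S ×ˢ S, g p ≤ C * Real.exp b ^ n := by
    intro p hp
    rw [hg]
    refine mul_le_mul_of_nonneg_left ?_ (Real.exp_pos _).le
    calc ∏ j, Real.exp ((b * p.1 j) * p.2 j) ≤ ∏ _j : Fin n, Real.exp b := by
          refine Finset.prod_le_prod (fun j _ => (Real.exp_pos _).le) (fun j _ => ?_)
          refine Real.exp_le_exp.2 ?_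
          have h1 : |p.1 j| ≤ 1 := abs_le.2 ⟨(hp.1 j (Set.mem_univ j)).1, (hp.1 j (Set.mem_univ j)).2⟩
          have h2 : |p.2 j| ≤ 1 := abs_le.2 ⟨(hp.2 j (Set.mem_univ j)).1, (hp.2 j (Set.mem_univ j)).2⟩
          calc (b * p.1 j) * p.2 j ≤ |(b * p.1 j) * p.2 j| := le_abs_self _
            _ = b * (|p.1 j| * |p.2 j|) := by rw [abs_mul, abs_mul, abs_of_nonneg hb0, mul_assoc]
            _ ≤ b * 1 := by
                refine mul_le_mul_of_nonneg_left ?_ hb0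
                exact mul_le_one₀ h1 (abs_nonneg _) h2
            _ = b := mul_one b
      _ = Real.exp b ^ n := by rw [Finset.prod_const, Finset.card_univ, Fintype.card_fin]
  have hgint : Integrable g ((muU n).prod (muU n)) := by
    refine Integrable.mono' (integrable_const (C * Real.exp b ^ n))
      hcont.aestronglyMeasurable ?_
    filter_upwards [hae] with p hp
    rw [Real.norm_eq_abs, abs_of_nonneg (hg0 p)]
    exact hbnd p hp
  have hmark := markov_exp ((muU n).prod (muU n)) hgint hg0
    {p : (Fin n → ℝ) × (Fin n → ℝ) | t ≤ ∑ j, p.2 j * p.1 j}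
    (fun p hp => by
      rw [hgexp]
      refine Real.one_le_exp ?_
      have hp' : t ≤ ∑ j, p.2 j * p.1 j := hp
      have hsum : ∑ j : Fin n, (b * p.1 j) * p.2 j = b * ∑ j, p.2 j * p.1 j := by
        rw [Finset.mul_sum]
        exact Finset.sum_congr rfl fun j _ => by ring
      rw [hsum]
      nlinarith [mul_le_mul_of_nonneg_left hp' hb0])
  refine hmark.trans ?_
  rw [integral_prod _ hgint]
  have hinner : ∀ v : Fin n → ℝ, ∫ u, g (v, u) ∂(muU n)
      = C * ∏ j, ∫ s, Real.exp ((b * v j) * s) ∂nuU := by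
    intro v
    rw [hg]
    simp only
    rw [integral_const_mul]
    simp only [muU]
    rw [my_integral_pi nuU (fun j s => Real.exp ((b * v j) * s))]
  have houter : ∀ v ∈ S, ∫ u, g (v, u) ∂(muU n) ≤ C * Real.exp (b^2/2) ^ n := by
    intro v hv
    rw [hinner v]
    refine mul_le_mul_of_nonneg_left ?_ (Real.exp_pos _).le
    calc ∏ j, ∫ s, Real.exp ((b * v j) * s) ∂nuU ≤ ∏ _j : Fin n, Real.exp (b^2/2) := by
          refine Finset.prod_le_prod (fun j _ => integral_nonneg fun s => (Real.exp_pos _).le)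
            (fun j _ => ?_)
          refine (nuU_exp_mul_le (b * v j)).trans (Real.exp_le_exp.2 ?_)
          have h1 : |v j| ≤ 1 := abs_le.2 ⟨(hv j (Set.mem_univ j)).1, (hv j (Set.mem_univ j)).2⟩
          have h2 : (v j)^2 ≤ 1 := by
            rw [← sq_abs]
            nlinarith [abs_nonneg (v j)]
          have : (b * v j)^2 ≤ b^2 := by
            rw [mul_pow]
            exact mul_le_of_le_one_right (sq_nonneg b) h2
          linarith
      _ = Real.exp (b^2/2) ^ n := by rw [Finset.prod_const, Finset.card_univ, Fintype.card_fin]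
  calc ∫ v, ∫ u, g (v, u) ∂(muU n) ∂(muU n)
      ≤ ∫ _v, C * Real.exp (b^2/2) ^ n ∂(muU n) := by
        refine integral_mono_ae hgint.integral_prod_left (integrable_const _) ?_
        have haeS : ∀ᵐ v ∂(muU n), v ∈ S := mem_ae_iff.2 (cube_compl_null n)
        filter_upwards [haeS] with v hv
        exact houter v hv
    _ = C * Real.exp (b^2/2) ^ n := by
        rw [integral_const]; simp
    _ = Real.exp (-(1/18*n*(1-ε)^2)) := by
        rw [hC, ← Real.exp_nat_mul, ← Real.exp_add]
        congr 1
        rw [ht, hb]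
        ring

/-- Specialization of 1-element stochastic separation to i.i.d. vectors uniform on
the cube `[-1,1]ⁿ` (so `R₀² = n/3`): with `h(v) = ⟨v/R₀, x_N/R₀⟩ - 1 + ε`,
`P(h(x_N) ≥ 0 ∧ h(x_i) < 0 ∀ i < N) ≥ 1 - exp(-(2/9)nε²) - (N-1)exp(-(1/18)n(1-ε)²)`.
Here the `N = M + 1` vectors are `x 0, …, x M` and `x_N = x (Fin.last M)`. -/
theorem one_element_separation_uniform_cube
    {Ω : Type*} [MeasurableSpace Ω] (P : Measure Ω) [IsProbabilityMeasure P]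
    (n M : ℕ) (hn : 0 < n) (x : Fin (M + 1) → Ω → (Fin n → ℝ))
    (hmeas : ∀ i, Measurable (x i))
    (hindep : iIndepFun x P)
    (hunif : ∀ i, Measure.map (x i) P =
      Measure.pi fun _ : Fin n => (2 : ENNReal)⁻¹ • volume.restrict (Set.Icc (-1 : ℝ) 1))
    (ε : ℝ) (hε : 0 < ε) (hε1 : ε < 1) :
    1 - Real.exp (-(2 / 9 * n * ε ^ 2))
      - M * Real.exp (-(1 / 18 * n * (1 - ε) ^ 2)) ≤
    (P {ω |
        0 ≤ (∑ j, x (Fin.last M) ω j * x (Fin.last M) ω j) / ((n : ℝ) / 3) - 1 + ε ∧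
        ∀ i : Fin M,
          (∑ j, x i.castSucc ω j * x (Fin.last M) ω j) / ((n : ℝ) / 3) - 1 + ε < 0}).toReal := by
  have hmuU : ∀ i, Measure.map (x i) P = muU n := fun i => hunif i
  set L := Fin.last M with hL
  have hr : (0:ℝ) < (n:ℝ)/3 := by positivity
  set t : ℝ := (1-ε)*((n:ℝ)/3) with ht
  -- measurable component functions
  have hco : ∀ (i : Fin (M+1)) (j : Fin n), Measurable (fun ω => x i ω j) :=
    fun i j => (measurable_pi_apply j).comp (hmeas i)
  have hf0 : Measurable (fun ω => ∑ j, x L ω j * x L ω j) :=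
    Finset.measurable_sum _ fun j _ => (hco L j).mul (hco L j)
  have hfi : ∀ i : Fin M, Measurable (fun ω => ∑ j, x i.castSucc ω j * x L ω j) :=
    fun i => Finset.measurable_sum _ fun j _ => (hco i.castSucc j).mul (hco L j)
  set A := {ω : Ω |
      0 ≤ (∑ j, x L ω j * x L ω j) / ((n : ℝ) / 3) - 1 + ε ∧
      ∀ i : Fin M, (∑ j, x i.castSucc ω j * x L ω j) / ((n : ℝ) / 3) - 1 + ε < 0} with hA
  have hAmeas : MeasurableSet A := by
    rw [hA]
    have : {ω : Ω |
        0 ≤ (∑ j, x L ω j * x L ω j) / ((n : ℝ) / 3) - 1 + ε ∧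
        ∀ i : Fin M, (∑ j, x i.castSucc ω j * x L ω j) / ((n : ℝ) / 3) - 1 + ε < 0}
      = {ω | 0 ≤ (∑ j, x L ω j * x L ω j) / ((n : ℝ) / 3) - 1 + ε}
        ∩ ⋂ i : Fin M, {ω | (∑ j, x i.castSucc ω j * x L ω j) / ((n : ℝ) / 3) - 1 + ε < 0} := by
      ext ω; simp [Set.mem_iInter]
    rw [this]
    refine MeasurableSet.inter ?_ (MeasurableSet.iInter fun i => ?_)
    · exact measurableSet_le measurable_const (((hf0.div_const _).sub measurable_const).add measurable_const)
    · exact measurableSet_lt ((((hfi i).div_const _).sub measurable_const).add measurable_const) measurable_const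
  set E0 := {ω : Ω | (∑ j, x L ω j * x L ω j) ≤ t} with hE0
  set Ei := fun i : Fin M => {ω : Ω | t ≤ ∑ j, x i.castSucc ω j * x L ω j} with hEi
  -- complement inclusion
  have hsub : Aᶜ ⊆ E0 ∪ ⋃ i, Ei i := by
    intro ω hω
    rw [hA] at hω
    simp only [Set.mem_compl_iff, Set.mem_setOf_eq, not_and_or, not_forall, not_le, not_lt] at hω
    rcases hω with h | ⟨i, hi⟩
    · left
      have h1 : (∑ j, x L ω j * x L ω j) / ((n : ℝ) / 3) < 1 - ε := by linarith
      exact le_of_lt ((div_lt_iff₀ hr).1 h1)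
    · right
      refine Set.mem_iUnion.2 ⟨i, ?_⟩
      have h1 : 1 - ε ≤ (∑ j, x i.castSucc ω j * x L ω j) / ((n : ℝ) / 3) := by linarith
      exact (le_div_iff₀ hr).1 h1
  -- measure of E0
  have hs0 : MeasurableSet {v : Fin n → ℝ | ∑ j, v j * v j ≤ t} :=
    measurableSet_le (Finset.measurable_sum _ fun j _ =>
      (measurable_pi_apply j).mul (measurable_pi_apply j)) measurable_const
  have hPE0 : (P E0).toReal ≤ Real.exp (-(2/9*n*ε^2)) := by
    have : P E0 = (muU n) {v | ∑ j, v j * v j ≤ t} := by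
      rw [← hmuU L, Measure.map_apply (hmeas L) hs0]
      rfl
    rw [this, ht]
    exact chernoffA n ε hε hε1
  -- measure of Ei
  have hsB : MeasurableSet {p : (Fin n → ℝ) × (Fin n → ℝ) | t ≤ ∑ j, p.2 j * p.1 j} :=
    measurableSet_le measurable_const (Finset.measurable_sum _ fun j _ =>
      ((measurable_pi_apply j).comp measurable_snd).mul
      ((measurable_pi_apply j).comp measurable_fst))
  have hPEi : ∀ i : Fin M, (P (Ei i)).toReal ≤ Real.exp (-(1/18*n*(1-ε)^2)) := by
    intro i
    have hne : L ≠ i.castSucc := (Fin.castSucc_lt_last i).ne'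
    have hidp : IndepFun (x L) (x i.castSucc) P := hindep.indepFun hne
    have hmap : Measure.map (fun ω => (x L ω, x i.castSucc ω)) P
        = (muU n).prod (muU n) := by
      refine ((indepFun_iff_map_prod_eq_prod_map_map (hmeas L).aemeasurable
        (hmeas i.castSucc).aemeasurable).1 hidp).trans ?_
      rw [hmuU L, hmuU i.castSucc]
    have hpre : P (Ei i) = ((muU n).prod (muU n))
        {p : (Fin n → ℝ) × (Fin n → ℝ) | t ≤ ∑ j, p.2 j * p.1 j} := by
      rw [← hmap, Measure.map_apply ((hmeas L).prodMk (hmeas i.castSucc)) hsB]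
      rfl
    rw [hpre, ht]
    exact chernoffB n ε hε hε1
  -- union bound
  have hE0meas : MeasurableSet E0 := measurableSet_le hf0 measurable_const
  have hEimeas : ∀ i, MeasurableSet (Ei i) := fun i => measurableSet_le measurable_const (hfi i)
  have hcompl : (P Aᶜ).toReal ≤ Real.exp (-(2/9*n*ε^2)) + M * Real.exp (-(1/18*n*(1-ε)^2)) := by
    have h1 : P Aᶜ ≤ P E0 + ∑ i : Fin M, P (Ei i) :=
      (measure_mono hsub).trans ((measure_union_le _ _).trans
        (add_le_add le_rfl (measure_iUnion_fintype_le _ _)))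
    have h2 : (P Aᶜ).toReal ≤ (P E0).toReal + ∑ i : Fin M, (P (Ei i)).toReal := by
      have := ENNReal.toReal_mono ?_ h1
      · rwa [ENNReal.toReal_add (measure_ne_top _ _) ?_, ENNReal.toReal_sum ?_] at this
        · intro i _; exact measure_ne_top _ _
        · exact (ENNReal.sum_lt_top.2 fun i _ => (measure_lt_top _ _)).ne
      · exact (ENNReal.add_lt_top.2 ⟨measure_lt_top _ _,
          ENNReal.sum_lt_top.2 fun i _ => measure_lt_top _ _⟩).ne
    refine h2.trans ?_
    have h3 : ∑ i : Fin M, (P (Ei i)).toReal ≤ M * Real.exp (-(1/18*n*(1-ε)^2)) := by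
      calc ∑ i : Fin M, (P (Ei i)).toReal ≤ ∑ _i : Fin M, Real.exp (-(1/18*n*(1-ε)^2)) :=
            Finset.sum_le_sum fun i _ => hPEi i
        _ = M * Real.exp (-(1/18*n*(1-ε)^2)) := by
            rw [Finset.sum_const, Finset.card_univ, Fintype.card_fin, nsmul_eq_mul]
    linarith [hPE0]
  have hsplit : (P A).toReal + (P Aᶜ).toReal = 1 := by
    rw [← ENNReal.toReal_add (measure_ne_top _ _) (measure_ne_top _ _),
      measure_add_measure_compl hAmeas]
    simp
  linarith [hcompl, hsplit]
end
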